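/- arXiv:1407.4964 — 8 statements merged into one kernel-verified Lean document; each statement's English description precedes it below -/
import Mathlib

section
/- Let s = q/q₁ be a meromorphic function on ℂ with q, q₁ entire having no common zeros, and let g₁ be entire with g = q₁·e^{-g₁} such that 1/g and s have the same principal parts at every pole of s. Define h = s - 1/g. Then h extends to an entire function on ℂ and for all z ∈ ℂ with q₁(z) ≠ 0, h(z) ≠ s(z); i.e. the graph of h does not meet the graph of s. -/
open Complex

/-- with `s = q/q₁` (no common zeros), `g = q₁·e^{-g₁}` such that `1/g` and `s`
have the same principal parts at every pole of `s` (i.e. `s - 1/g` has removable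
singularities at all poles of `s`), the function `h = s - 1/g` extends to an entire
function whose graph does not meet the graph of `s`. -/
theorem stmt_1 (q q₁ g₁ : ℂ → ℂ)
    (hq : Differentiable ℂ q) (hq₁ : Differentiable ℂ q₁) (hg₁ : Differentiable ℂ g₁)
    (hnc : ∀ z : ℂ, ¬(q z = 0 ∧ q₁ z = 0))
    -- `s - 1/g` has a removable singularity at every pole of `s`:
    (hpp : ∀ z₀ : ℂ, q₁ z₀ = 0 →
      ∃ (U : Set ℂ) (h₀ : ℂ → ℂ), U ∈ nhds z₀ ∧ DifferentiableOn ℂ h₀ U ∧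
        ∀ z ∈ U, q₁ z ≠ 0 →
          h₀ z = q z / q₁ z - 1 / (q₁ z * Complex.exp (-(g₁ z)))) :
    ∃ h : ℂ → ℂ, Differentiable ℂ h ∧
      (∀ z : ℂ, q₁ z ≠ 0 →
        h z = q z / q₁ z - 1 / (q₁ z * Complex.exp (-(g₁ z)))) ∧
      (∀ z : ℂ, q₁ z ≠ 0 → h z ≠ q z / q₁ z) := by
  classical
  by_cases hzero : ∀ z, q₁ z = 0
  · exact ⟨0, differentiable_const 0, fun z hz => absurd (hzero z) hz,
      fun z hz => absurd (hzero z) hz⟩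
  push_neg at hzero
  obtain ⟨w, hw⟩ := hzero
  choose U h₀ hU hdiff heq using hpp
  set F : ℂ → ℂ := fun z => q z - Complex.exp (g₁ z) with hF
  have hFd : Differentiable ℂ F := hq.sub (Complex.differentiable_exp.comp hg₁)
  set h : ℂ → ℂ := fun z => if hz : q₁ z = 0 then h₀ z hz z else F z / q₁ z with hh
  have key : ∀ z, q₁ z ≠ 0 → F z / q₁ z
      = q z / q₁ z - 1 / (q₁ z * Complex.exp (-(g₁ z))) := by
    intro z hz
    rw [Complex.exp_neg]
    field_simp
    rfl
  have hval : ∀ z, q₁ z ≠ 0 → h z = F z / q₁ z := by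
    intro z hz
    simp only [hh, dif_neg hz]
  refine ⟨h, ?_, fun z hz => (hval z hz).trans (key z hz), ?_⟩
  · intro z₀
    by_cases hz₀ : q₁ z₀ = 0
    · have hiso : ∀ᶠ z in nhdsWithin z₀ {z₀}ᶜ, q₁ z ≠ 0 := by
        rcases (hq₁.analyticAt z₀).eventually_eq_zero_or_eventually_ne_zero with h1 | h2
        · exfalso
          apply hw
          have hq₁a : AnalyticOnNhd ℂ q₁ Set.univ := fun z _ => hq₁.analyticAt z
          exact hq₁a.eqOn_zero_of_preconnected_of_eventuallyEq_zero isPreconnected_univ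
            (Set.mem_univ z₀) h1 (Set.mem_univ w)
        · exact h2
      have heqn : h =ᶠ[nhds z₀] h₀ z₀ hz₀ := by
        have h1 : ∀ᶠ z in nhds z₀, z ∈ ({z₀}ᶜ : Set ℂ) → q₁ z ≠ 0 :=
          eventually_nhdsWithin_iff.mp hiso
        filter_upwards [h1, hU z₀ hz₀] with z hz hzU
        by_cases hzz : z = z₀
        · subst hzz
          simp only [hh, dif_pos hz₀]
        · have hq₁z := hz (Set.mem_compl_singleton_iff.mpr hzz)
          rw [hval z hq₁z, key z hq₁z, heq z₀ hz₀ z hzU hq₁z]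
      exact ((hdiff z₀ hz₀).differentiableAt (hU z₀ hz₀)).congr_of_eventuallyEq heqn
    · have hopen : {z : ℂ | q₁ z ≠ 0} ∈ nhds z₀ :=
        (isOpen_compl_iff.mpr (isClosed_eq hq₁.continuous continuous_const)).mem_nhds hz₀
      have heqn : h =ᶠ[nhds z₀] fun z => F z / q₁ z := by
        filter_upwards [hopen] with z hz using hval z hz
      exact ((hFd z₀).div (hq₁ z₀) hz₀).congr_of_eventuallyEq heqn
  · intro z hz
    rw [hval z hz]
    intro hcon
    have : Complex.exp (g₁ z) / q₁ z = 0 := by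
      have : F z / q₁ z = q z / q₁ z - Complex.exp (g₁ z) / q₁ z := by
        field_simp
        rfl
      rw [this] at hcon
      linear_combination -hcon
    exact (Complex.exp_ne_zero (g₁ z)) (by
      field_simp at this; simpa using this)
end

section
/- Let s = q/q₁ with q, q₁ entire without common zeros, g entire with g(z) = q₁(z)e^{-g₁(z)}, and suppose h = s - 1/g is entire. Then the map Φ(z,w) = (z, s(z) - e^{g(z)w}/g(z)) (interpreted as (z, h(z) - w) when g(z) = 0) is a holomorphic map from ℂ² onto ℂ² \ graph(s), and its Jacobian determinant is nowhere vanishing. -/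
open Complex

/-- The entire function `Ψ(t,w) = (e^{tw} - 1)/t`, extended by `Ψ(0,w) = w`. -/
noncomputable def Psi : ℂ × ℂ → ℂ :=
  fun p => if p.1 = 0 then p.2 else (Complex.exp (p.1 * p.2) - 1) / p.1

/-- The Buzzard–Lu map `Φ(z,w) = (z, h(z) - Ψ(g(z), w)) = (z, s(z) - e^{g(z)w}/g(z))`,
interpreted as `(z, h(z) - w)` when `g(z) = 0`. -/
noncomputable def PhiBL (g₁ h : ℂ → ℂ) (g : ℂ → ℂ) : ℂ × ℂ → ℂ × ℂ :=
  fun p => (p.1, h p.1 - Psi (g p.1, p.2))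

/-- The entire function `E(u) = (e^u - 1)/u`, extended by `E(0) = 1`,
realized as `dslope exp 0`. -/
noncomputable def Ebl : ℂ → ℂ := dslope Complex.exp 0

lemma Ebl_zero : Ebl 0 = 1 := by
  simp [Ebl, dslope_same, Complex.deriv_exp]

lemma Ebl_ne {u : ℂ} (hu : u ≠ 0) : Ebl u = (Complex.exp u - 1) / u := by
  simp [Ebl, dslope_of_ne _ hu, slope_def_field, Complex.exp_zero, div_eq_inv_mul]

lemma Ebl_diff : Differentiable ℂ Ebl := by
  have h : DifferentiableOn ℂ (dslope Complex.exp 0) Set.univ :=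
    (Complex.differentiableOn_dslope (Filter.univ_mem)).2
      Complex.differentiable_exp.differentiableOn
  intro z
  exact (h z trivial).differentiableAt Filter.univ_mem

lemma Psi_eq (p : ℂ × ℂ) : Psi p = p.2 * Ebl (p.1 * p.2) := by
  rcases eq_or_ne p.1 0 with h1 | h1
  · simp [Psi, h1, Ebl_zero]
  · rcases eq_or_ne p.2 0 with h2 | h2
    · simp [Psi, h1, h2]
    · rw [Psi, if_neg h1, Ebl_ne (mul_ne_zero h1 h2)]
      field_simp

lemma Psi_diff : Differentiable ℂ Psi := by
  have : Psi = fun p : ℂ × ℂ => p.2 * Ebl (p.1 * p.2) := funext Psi_eq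
  rw [this]
  exact differentiable_snd.mul
    (Ebl_diff.comp (differentiable_fst.mul differentiable_snd))

/-- `Φ` is a holomorphic map from `ℂ²` onto `ℂ² \ graph(s)` with nowhere
vanishing Jacobian determinant. -/
theorem stmt_2 (q q₁ g₁ h : ℂ → ℂ)
    (hq : Differentiable ℂ q) (hq₁ : Differentiable ℂ q₁) (hg₁ : Differentiable ℂ g₁)
    (hnc : ∀ z : ℂ, ¬(q z = 0 ∧ q₁ z = 0))
    (hh : Differentiable ℂ h)
    (hrel : ∀ z : ℂ, q₁ z ≠ 0 →
      h z = q z / q₁ z - 1 / (q₁ z * Complex.exp (-(g₁ z)))) :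
    letI g : ℂ → ℂ := fun z => q₁ z * Complex.exp (-(g₁ z))
    Differentiable ℂ (PhiBL g₁ h g) ∧
    -- the image is exactly the complement of graph(s):
    Set.range (PhiBL g₁ h g) = {p : ℂ × ℂ | q₁ p.1 * p.2 ≠ q p.1} ∧
    -- the Jacobian determinant (here the fiberwise derivative) never vanishes:
    (∀ z w : ℂ, deriv (fun w' => (PhiBL g₁ h g (z, w')).2) w ≠ 0) := by
  set g : ℂ → ℂ := fun z => q₁ z * Complex.exp (-(g₁ z)) with hgdef
  have hg : Differentiable ℂ g := hq₁.mul (Complex.differentiable_exp.comp hg₁.neg)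
  have hgz : ∀ z, g z = 0 ↔ q₁ z = 0 := by
    intro z
    simp [g, Complex.exp_ne_zero]
  constructor
  · -- differentiability
    exact differentiable_fst.prodMk ((hh.comp differentiable_fst).sub
      (Psi_diff.comp ((hg.comp differentiable_fst).prodMk differentiable_snd)))
  constructor
  · -- range
    ext p
    simp only [Set.mem_range, Set.mem_setOf_eq]
    constructor
    · rintro ⟨⟨z, w⟩, rfl⟩
      simp only [PhiBL]
      rcases eq_or_ne (q₁ z) 0 with h0 | h0
      · -- g z = 0, value is h z - w, and q₁ z = 0 while q z ≠ 0
        have : q z ≠ 0 := fun hqz => hnc z ⟨hqz, h0⟩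
        simp only [h0, zero_mul]
        exact this.symm
      · have hgne : g z ≠ 0 := by rw [Ne, hgz]; exact h0
        rw [Psi, if_neg hgne]
        have hhz := hrel z h0
        intro hcontra
        -- q₁ z * (h z - (exp (g z * w) - 1)/g z) = q z
        have hge : Complex.exp (g z * w) ≠ 0 := Complex.exp_ne_zero _
        have hid : (1 : ℂ) / (q₁ z * Complex.exp (-(g₁ z))) = 1 / g z := rfl
        have key : q₁ z * (h z - (Complex.exp (g z * w) - 1) / g z)
            = q z - q₁ z * Complex.exp (g z * w) / g z := by
          rw [hhz, hid]
          field_simp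
          ring
        rw [key] at hcontra
        have h5 : q₁ z * Complex.exp (g z * w) / g z = 0 := sub_eq_self.mp hcontra
        rcases div_eq_zero_iff.mp h5 with h6 | h6
        · rcases mul_eq_zero.mp h6 with h7 | h7
          exacts [h0 h7, hge h7]
        · exact hgne h6
    · intro hp
      obtain ⟨z, w⟩ := p
      simp only at hp
      rcases eq_or_ne (q₁ z) 0 with h0 | h0
      · -- g z = 0; take w' = h z - w
        have hgz0 : g z = 0 := (hgz z).2 h0
        refine ⟨(z, h z - w), ?_⟩
        simp [PhiBL, Psi, hgz0]
      · have hgne : g z ≠ 0 := by rw [Ne, hgz]; exact h0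
        have hc : (1 : ℂ) + g z * (h z - w) ≠ 0 := by
          rw [hrel z h0]
          have : (1 : ℂ) / (q₁ z * Complex.exp (-(g₁ z))) = 1 / g z := rfl
          rw [this]
          have : (1 : ℂ) + g z * (q z / q₁ z - 1 / g z - w)
              = g z / q₁ z * (q z - q₁ z * w) := by
            field_simp
            ring
          rw [this]
          exact mul_ne_zero (div_ne_zero hgne h0) (sub_ne_zero.2 (Ne.symm hp))
        obtain ⟨u, hu⟩ : (1 + g z * (h z - w)) ∈ Set.range Complex.exp := by
          rw [Complex.range_exp]
          exact hc
        refine ⟨(z, u / g z), ?_⟩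
        simp only [PhiBL, Psi, if_neg hgne, Prod.mk.injEq]
        refine ⟨trivial, ?_⟩
        rw [mul_div_cancel₀ _ hgne, hu]
        field_simp
        ring
  · -- derivative
    intro z w
    rcases eq_or_ne (g z) 0 with hgz0 | hgne
    · have : (fun w' => (PhiBL g₁ h g (z, w')).2) = fun w' => h z - w' := by
        funext w'
        simp [PhiBL, Psi, hgz0]
      rw [this]
      have hd : HasDerivAt (fun w' : ℂ => h z - w') (-1) w :=
        (hasDerivAt_id w).const_sub (h z)
      rw [hd.deriv]
      norm_num
    · have hfd : HasDerivAt (fun w' => (PhiBL g₁ h g (z, w')).2)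
          (-(Complex.exp (g z * w))) w := by
        have h1 : HasDerivAt (fun w' => g z * w') (g z) w := by
          simpa using (hasDerivAt_id w).const_mul (g z)
        have h2 : HasDerivAt (fun w' => Complex.exp (g z * w'))
            (Complex.exp (g z * w) * g z) w := (Complex.hasDerivAt_exp _).comp w h1
        have h3 : HasDerivAt (fun w' => (Complex.exp (g z * w') - 1) / g z)
            (Complex.exp (g z * w) * g z / g z) w := (h2.sub_const 1).div_const _
        have h4 : HasDerivAt (fun w' => h z - (Complex.exp (g z * w') - 1) / g z)
            (0 - Complex.exp (g z * w) * g z / g z) w := (hasDerivAt_const w (h z)).sub h3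
        have heq : (fun w' => (PhiBL g₁ h g (z, w')).2)
            = fun w' => h z - (Complex.exp (g z * w') - 1) / g z := by
          funext w'
          simp [PhiBL, Psi, hgne]
        rw [heq]
        convert h4 using 1
        field_simp
        ring
      rw [hfd.deriv]
      simpa using Complex.exp_ne_zero (g z * w)
end

section
/- Let a, b, c be entire functions on ℂ and u entire. The vector field W^u(z,w) = e^{u(z)}(a(z)w² + b(z)w + c(z)) ∂/∂w on ℂ × ℙ¹ extends to a holomorphic vector field on ℂ × ℙ¹ that vanishes exactly on the double section D = {(z,w) : a(z)w² + b(z)w + c(z) = 0} (including points at infinity when a(z) = 0), and W^u is complete on (ℂ × ℙ¹) \ D. -/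
open Complex

/-- the vector field `W^u(z,w) = e^{u(z)}(a(z)w² + b(z)w + c(z)) ∂/∂w`
extends holomorphically to `ℂ × ℙ¹`, vanishing exactly on the double section `D`
(in the chart `v = 1/w` at infinity it reads `-e^{u(z)}(c(z)v² + b(z)v + a(z)) ∂/∂v`,
so it vanishes at infinity over `z` iff `a(z) = 0`), and `W^u` is complete on
`(ℂ × ℙ¹) \ D`: in homogeneous coordinates `w = W₀/W₁` the flow is given by the global
solutions of a linear system, which stay off `D`. -/
theorem stmt_7 (a b c u : ℂ → ℂ)
    (ha : Differentiable ℂ a) (hb : Differentiable ℂ b) (hc : Differentiable ℂ c)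
    (hu : Differentiable ℂ u) :
    -- vanishing at finite points is exactly on D
    (∀ z w : ℂ, Complex.exp (u z) * (a z * w ^ 2 + b z * w + c z) = 0 ↔
        a z * w ^ 2 + b z * w + c z = 0) ∧
    -- the chart-at-infinity expression is holomorphic and vanishes at ∞ over z iff a z = 0
    ((∀ z : ℂ, Differentiable ℂ
        (fun v : ℂ => -Complex.exp (u z) * (c z * v ^ 2 + b z * v + a z))) ∧
      (∀ z : ℂ, -Complex.exp (u z) * (c z * (0 : ℂ) ^ 2 + b z * 0 + a z) = 0 ↔ a z = 0)) ∧
    -- completeness on the complement of D, in homogeneous coordinates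
    (∀ z₀ w₀ : ℂ, a z₀ * w₀ ^ 2 + b z₀ * w₀ + c z₀ ≠ 0 →
      ∃ W₀ W₁ : ℂ → ℂ, W₀ 0 = w₀ ∧ W₁ 0 = 1 ∧
        (∀ t : ℂ, (W₀ t, W₁ t) ≠ (0, 0)) ∧
        (∀ t : ℂ, HasDerivAt W₀
          (Complex.exp (u z₀) * (b z₀ / 2 * W₀ t + c z₀ * W₁ t)) t) ∧
        (∀ t : ℂ, HasDerivAt W₁
          (Complex.exp (u z₀) * (-(a z₀) * W₀ t - b z₀ / 2 * W₁ t)) t) ∧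
        (∀ t : ℂ, a z₀ * W₀ t ^ 2 + b z₀ * W₀ t * W₁ t + c z₀ * W₁ t ^ 2 ≠ 0)) := by
  refine ⟨?_, ⟨?_, ?_⟩, ?_⟩
  · intro z w
    constructor
    · intro h; exact (mul_eq_zero.1 h).resolve_left (Complex.exp_ne_zero _)
    · intro h; rw [h, mul_zero]
  · intro z; fun_prop
  · intro z; simp [Complex.exp_ne_zero]
  · intro z₀ w₀ hne
    set e := Complex.exp (u z₀) with he
    set A : (ℂ × ℂ) →L[ℂ] ℂ × ℂ :=
      (((e * (b z₀ / 2)) • ContinuousLinearMap.fst ℂ ℂ ℂ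
          + (e * c z₀) • ContinuousLinearMap.snd ℂ ℂ ℂ).prod
        ((-(e * a z₀)) • ContinuousLinearMap.fst ℂ ℂ ℂ
          + (-(e * (b z₀ / 2))) • ContinuousLinearMap.snd ℂ ℂ ℂ)) with hA
    set W : ℂ → ℂ × ℂ := fun t => NormedSpace.exp (t • A) (w₀, 1) with hWdef
    have hW0 : W 0 = (w₀, 1) := by
      show (NormedSpace.exp ((0 : ℂ) • A)) (w₀, 1) = (w₀, 1)
      have : (0 : ℂ) • A = 0 := zero_smul ℂ A
      rw [this, NormedSpace.exp_zero]
      rfl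
    have hW : ∀ t, HasDerivAt W (A (W t)) t := by
      intro t
      have h1 := hasDerivAt_exp_smul_const' (𝕂 := ℂ) A t
      have h2 := h1.clm_apply (hasDerivAt_const t ((w₀, 1) : ℂ × ℂ))
      simpa [ContinuousLinearMap.mul_apply, hWdef] using h2
    have hAfst : ∀ p : ℂ × ℂ, (A p).1 = e * (b z₀ / 2 * p.1 + c z₀ * p.2) := by
      intro p; simp [hA]; ring
    have hAsnd : ∀ p : ℂ × ℂ, (A p).2 = e * (-(a z₀) * p.1 - b z₀ / 2 * p.2) := by
      intro p; simp [hA]; ring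
    have hW0' : ∀ t, HasDerivAt (fun t => (W t).1)
        (e * (b z₀ / 2 * (W t).1 + c z₀ * (W t).2)) t := by
      intro t
      have h := ((hW t).hasFDerivAt.fst).hasDerivAt
      simpa [hAfst] using h
    have hW1' : ∀ t, HasDerivAt (fun t => (W t).2)
        (e * (-(a z₀) * (W t).1 - b z₀ / 2 * (W t).2)) t := by
      intro t
      have h := ((hW t).hasFDerivAt.snd).hasDerivAt
      simpa [hAsnd] using h
    set Q : ℂ → ℂ := fun t =>
      a z₀ * (W t).1 ^ 2 + b z₀ * (W t).1 * (W t).2 + c z₀ * (W t).2 ^ 2 with hQdef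
    have hQ : ∀ t, HasDerivAt Q 0 t := by
      intro t
      have h0 := hW0' t
      have h1 := hW1' t
      have hd := (((h0.pow 2).const_mul (a z₀)).add
        (((h0.mul h1).const_mul (b z₀)))).add ((h1.pow 2).const_mul (c z₀))
      refine (hd.congr_of_eventuallyEq (Filter.EventuallyEq.of_eq ?_)).congr_deriv ?_
      · funext x; simp only [hQdef, Pi.add_apply, Pi.pow_apply, Pi.mul_apply]; ring
      · push_cast; ring
    have hconst : ∀ t, Q t = Q 0 := fun t =>
      is_const_of_fderiv_eq_zero (fun x => (hQ x).differentiableAt)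
        (fun x => by
          rw [(hQ x).hasFDerivAt.fderiv]
          ext
          simp) t 0
    have hQ0 : Q 0 = a z₀ * w₀ ^ 2 + b z₀ * w₀ + c z₀ := by
      simp [hQdef, hW0]
    have hQne : ∀ t, Q t ≠ 0 := by
      intro t h
      exact hne (by rw [← hQ0, ← hconst t, h])
    refine ⟨fun t => (W t).1, fun t => (W t).2, by simpa using congrArg Prod.fst hW0,
      by simpa using congrArg Prod.snd hW0, ?_, hW0', hW1', hQne⟩
    intro t h
    apply hQne t
    have h1 : (W t).1 = 0 := congrArg Prod.fst h
    have h2 : (W t).2 = 0 := congrArg Prod.snd h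
    simp [hQdef, h1, h2]
end

section
/- A Riemann surface of the form ℂ minus a finite nonempty set of k ≥ 2 points admits no complete holomorphic vector field that is not identically zero. Consequently, if a meromorphic function s on ℂ has at least two poles, there is no complete holomorphic vector field on ℂ² tangent to graph(s) and not identically zero on graph(s). -/
open Complex

section AuxiliaryPicardLindelofRigidity

open Set Filter Metric Bornology Function

noncomputable section

private lemma glue_zero {g : ℂ → ℂ} {c : ℂ}
    (hg : ∀ w : ℂ, w ≠ 0 → DifferentiableAt ℂ g w)
    (hc : Tendsto g (nhdsWithin (0:ℂ) {(0:ℂ)}ᶜ) (nhds c)) :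
    Differentiable ℂ (fun w => if w = 0 then c else g w) := by
  set G : ℂ → ℂ := fun w => if w = 0 then c else g w with hG
  have hGoff : ∀ w : ℂ, w ≠ 0 → DifferentiableAt ℂ G w := by
    intro w hw
    have hev : G =ᶠ[nhds w] g := by
      filter_upwards [isOpen_compl_singleton.mem_nhds (by simpa using hw : w ∈ ({(0:ℂ)}ᶜ : Set ℂ))] with x hx
      simp [hG, (by simpa using hx : x ≠ 0)]
    exact (hg w hw).congr_of_eventuallyEq hev
  intro w
  rcases eq_or_ne w 0 with rfl | hw
  · -- removable singularity at 0
    have hd : ∀ᶠ z in nhdsWithin (0:ℂ) {(0:ℂ)}ᶜ, DifferentiableAt ℂ G z := by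
      filter_upwards [self_mem_nhdsWithin] with x hx
      exact hGoff x (by simpa using hx)
    have hcont : ContinuousAt G 0 := by
      have h1 : Tendsto G (nhdsWithin (0:ℂ) {(0:ℂ)}ᶜ) (nhds c) := by
        apply hc.congr'
        filter_upwards [self_mem_nhdsWithin] with x hx
        simp [hG, (by simpa using hx : x ≠ 0)]
      have h2 : Tendsto G (pure (0:ℂ)) (nhds c) := by
        have : G 0 = c := by simp [hG]
        rw [tendsto_pure_left]
        intro s hs
        rw [this]; exact mem_of_mem_nhds hs
      have hsup : nhdsWithin (0:ℂ) {(0:ℂ)}ᶜ ⊔ pure (0:ℂ) = nhds (0:ℂ) :=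
        nhdsNE_sup_pure (0:ℂ)
      have : Tendsto G (nhdsWithin (0:ℂ) {(0:ℂ)}ᶜ ⊔ pure (0:ℂ)) (nhds c) :=
        tendsto_sup.mpr ⟨h1, h2⟩
      rw [hsup] at this
      have hG0 : G 0 = c := by simp [hG]
      rw [ContinuousAt, hG0]; exact this
    exact (Complex.analyticAt_of_differentiable_on_punctured_nhds_of_continuousAt hd hcont).differentiableAt
  · exact hGoff w hw

private lemma const_of_bdd_ends {G : ℂ → ℂ} (hG : Differentiable ℂ G) {R M : ℝ}
    (h : ∀ w : ℂ, R ≤ ‖w‖ → ‖G w‖ ≤ M) : ∀ z w : ℂ, G z = G w := by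
  have hb : IsBounded (range G) := by
    have h1 : range G ⊆ G '' (closedBall (0:ℂ) R) ∪ closedBall (0:ℂ) M := by
      rintro _ ⟨z, rfl⟩
      rcases le_or_gt ‖z‖ R with hz | hz
      · exact Or.inl ⟨z, by simpa [dist_zero_right] using hz, rfl⟩
      · exact Or.inr (by simpa [dist_zero_right] using h z hz.le)
    exact (((isCompact_closedBall (0:ℂ) R).image hG.continuous).isBounded.union
      isBounded_closedBall).subset h1
  exact fun z w => hG.apply_eq_apply_of_bounded hb z w

private lemma image_ball_open {g : ℂ → ℂ} {z : ℂ} {r : ℝ}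
    (hg : DifferentiableOn ℂ g (ball z r))
    (hnc : ∃ x ∈ ball z r, ∃ y ∈ ball z r, g x ≠ g y) :
    IsOpen (g '' ball z r) := by
  have han : AnalyticOnNhd ℂ g (ball z r) := hg.analyticOnNhd isOpen_ball
  rcases han.is_constant_or_isOpen (convex_ball z r).isPreconnected with hc | ho
  · obtain ⟨w, hw⟩ := hc
    obtain ⟨x, hx, y, hy, hne⟩ := hnc
    exact absurd (by rw [hw x hx, hw y hy]) hne
  · exact ho _ (subset_refl _) isOpen_ball

private lemma end_behavior {g : ℂ → ℂ}
    (hg : ∀ w : ℂ, w ≠ 0 → DifferentiableAt ℂ g w)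
    (hinj : ∀ w₁ : ℂ, w₁ ≠ 0 → ∀ w₂ : ℂ, w₂ ≠ 0 → g w₁ = g w₂ → w₁ = w₂) :
    (∃ c, Tendsto g (nhdsWithin (0:ℂ) {(0:ℂ)}ᶜ) (nhds c)) ∨
      Tendsto (fun w => ‖g w‖) (nhdsWithin (0:ℂ) {(0:ℂ)}ᶜ) atTop := by
  -- points of the reference ball are away from 0
  have hball : ∀ w : ℂ, w ∈ ball (3/4 : ℂ) (1/8) → (w ≠ 0 ∧ (1/2 : ℝ) < ‖w‖) := by
    intro w hw
    rw [mem_ball] at hw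
    have h34 : ‖(3/4 : ℂ)‖ = 3/4 := by
      rw [show (3/4 : ℂ) = ((3/4 : ℝ) : ℂ) by norm_num, Complex.norm_real]; norm_num
    have : ‖(3/4 : ℂ)‖ - ‖w‖ ≤ ‖(3/4 : ℂ) - w‖ := by
      simpa using norm_sub_norm_le ((3/4 : ℂ)) w
    have hd : ‖(3/4:ℂ) - w‖ < 1/8 := by rwa [dist_comm, dist_eq] at hw
    constructor
    · intro h0; rw [h0] at hd; simp [h34] at hd; norm_num at hd
    · nlinarith [h34]
  -- the image of the reference ball is open
  have hO : IsOpen (g '' ball (3/4 : ℂ) (1/8)) := by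
    apply image_ball_open
    · intro x hx; exact (hg x (hball x hx).1).differentiableWithinAt
    · refine ⟨3/4, by simp [mem_ball], 3/4 + 1/16, by
        rw [mem_ball, dist_eq]; norm_num, ?_⟩
      intro hEq
      have h1 : (3/4 : ℂ) ≠ 0 := by norm_num
      have h2 : (3/4 + 1/16 : ℂ) ≠ 0 := by norm_num
      have := hinj _ h1 _ h2 hEq
      norm_num at this
  have hOne : (g (3/4 : ℂ)) ∈ g '' ball (3/4 : ℂ) (1/8) :=
    ⟨3/4, by simp [mem_ball], rfl⟩
  -- small punctured disc values avoid the image of the reference ball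
  have hdisj : ∀ w : ℂ, w ≠ 0 → ‖w‖ < 1/2 → g w ∉ g '' ball (3/4 : ℂ) (1/8) := by
    rintro w hw hws ⟨w', hw', hEq⟩
    obtain ⟨hw'0, hw'n⟩ := hball w' hw'
    have := hinj w' hw'0 w hw hEq
    rw [this] at hw'n; linarith
  -- get a value and radius avoided by g near 0
  set c := g (3/4 : ℂ) with hcdef
  obtain ⟨δ, hδ, hcball⟩ := Metric.isOpen_iff.mp hO _ hOne
  have havoid : ∀ w : ℂ, w ≠ 0 → ‖w‖ < 1/2 → δ ≤ ‖g w - c‖ := by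
    intro w hw hws
    by_contra hlt
    push_neg at hlt
    exact hdisj w hw hws (hcball (by rwa [mem_ball, dist_eq]))
  -- removable singularity for h = (g - c)⁻¹
  set h : ℂ → ℂ := fun w => (g w - c)⁻¹ with hhdef
  have hd : DifferentiableOn ℂ h (ball (0:ℂ) (1/2) \ {0}) := by
    intro w hw
    obtain ⟨hw1, hw2⟩ := hw
    have hw0 : w ≠ 0 := by simpa using hw2
    have hnorm : ‖w‖ < 1/2 := by rwa [mem_ball, dist_zero_right] at hw1
    have : g w - c ≠ 0 := by
      intro hzero
      have := havoid w hw0 hnorm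
      rw [hzero] at this; simp at this; linarith
    exact (((hg w hw0).sub_const c).inv this).differentiableWithinAt
  have hbdd : BddAbove (norm ∘ h '' (ball (0:ℂ) (1/2) \ {0})) := by
    refine ⟨δ⁻¹, ?_⟩
    rintro _ ⟨w, ⟨hw1, hw2⟩, rfl⟩
    have hw0 : w ≠ 0 := by simpa using hw2
    have hnorm : ‖w‖ < 1/2 := by rwa [mem_ball, dist_zero_right] at hw1
    simp only [comp_apply, hhdef, norm_inv]
    exact inv_anti₀ hδ (havoid w hw0 hnorm)
  have hupd := Complex.differentiableOn_update_limUnder_of_bddAbove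
    (ball_mem_nhds (0:ℂ) (by norm_num)) hd hbdd
  set L := limUnder (nhdsWithin (0:ℂ) {(0:ℂ)}ᶜ) h with hLdef
  have hHcont : Tendsto h (nhdsWithin (0:ℂ) {(0:ℂ)}ᶜ) (nhds L) := by
    have hda : DifferentiableAt ℂ (update h 0 L) 0 :=
      hupd.differentiableAt (ball_mem_nhds (0:ℂ) (by norm_num))
    have h1 : Tendsto (update h 0 L) (nhds (0:ℂ)) (nhds L) := by
      have := hda.continuousAt
      rwa [ContinuousAt, update_self] at this
    have h2 : Tendsto (update h 0 L) (nhdsWithin (0:ℂ) {(0:ℂ)}ᶜ) (nhds L) :=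
      h1.mono_left nhdsWithin_le_nhds
    apply h2.congr'
    filter_upwards [self_mem_nhdsWithin] with x hx
    exact (update_of_ne (by simpa using hx) _ _).symm ▸ rfl
  -- the two cases
  rcases eq_or_ne L 0 with hL | hL
  · right
    rw [hL] at hHcont
    have hnz : ∀ᶠ w in nhdsWithin (0:ℂ) {(0:ℂ)}ᶜ, 0 < ‖h w‖ ∧ ‖w‖ < 1/2 := by
      have hsmall : ∀ᶠ w in nhdsWithin (0:ℂ) {(0:ℂ)}ᶜ, ‖w‖ < 1/2 := by
        apply eventually_nhdsWithin_of_eventually_nhds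
        have := Metric.ball_mem_nhds (0:ℂ) (show (0:ℝ) < 1/2 by norm_num)
        filter_upwards [this] with x hx; rwa [mem_ball, dist_zero_right] at hx
      filter_upwards [hsmall, self_mem_nhdsWithin] with w hw hw0
      refine ⟨?_, hw⟩
      have : g w - c ≠ 0 := by
        intro hzero
        have := havoid w (by simpa using hw0) hw
        rw [hzero] at this; simp at this; linarith
      simp [hhdef, norm_pos_iff, this]
    have htop : Tendsto (fun w => ‖h w‖⁻¹) (nhdsWithin (0:ℂ) {(0:ℂ)}ᶜ) atTop := by
      apply Filter.Tendsto.inv_tendsto_nhdsGT_zero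
      rw [tendsto_nhdsWithin_iff]
      constructor
      · simpa using hHcont.norm
      · filter_upwards [hnz] with w hw; exact hw.1
    have hgc : Tendsto (fun w => ‖g w - c‖) (nhdsWithin (0:ℂ) {(0:ℂ)}ᶜ) atTop := by
      apply htop.congr'
      filter_upwards [hnz, self_mem_nhdsWithin] with w hw hw0
      rw [hhdef, norm_inv, inv_inv]
    have : Tendsto (fun w => ‖g w - c‖ - ‖c‖) (nhdsWithin (0:ℂ) {(0:ℂ)}ᶜ) atTop :=
      tendsto_atTop_add_const_right _ _ hgc
    refine tendsto_atTop_mono' _ ?_ this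
    filter_upwards with w
    have h2 : ‖g w - c‖ ≤ ‖g w‖ + ‖c‖ := norm_sub_le _ _
    show ‖g w - c‖ - ‖c‖ ≤ ‖g w‖
    linarith
  · left
    refine ⟨L⁻¹ + c, ?_⟩
    have hinv : Tendsto (fun w => (h w)⁻¹ + c) (nhdsWithin (0:ℂ) {(0:ℂ)}ᶜ) (nhds (L⁻¹ + c)) :=
      (hHcont.inv₀ hL).add_const c
    apply hinv.congr'
    have hsmall : ∀ᶠ w in nhdsWithin (0:ℂ) {(0:ℂ)}ᶜ, ‖w‖ < 1/2 := by
      apply eventually_nhdsWithin_of_eventually_nhds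
      filter_upwards [Metric.ball_mem_nhds (0:ℂ) (show (0:ℝ) < 1/2 by norm_num)] with x hx
      rwa [mem_ball, dist_zero_right] at hx
    filter_upwards [hsmall, self_mem_nhdsWithin] with w hw hw0
    have : g w - c ≠ 0 := by
      intro hzero
      have := havoid w (by simpa using hw0) hw
      rw [hzero] at this; simp at this; linarith
    rw [hhdef, inv_inv]
    ring

private lemma eventually_small {p : ℂ → Prop} (h : ∀ᶠ w in nhdsWithin (0:ℂ) {(0:ℂ)}ᶜ, p w) :
    ∃ ε > 0, ∀ w : ℂ, w ≠ 0 → ‖w‖ < ε → p w := by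
  rw [eventually_nhdsWithin_iff, Metric.eventually_nhds_iff] at h
  obtain ⟨ε, hε, h⟩ := h
  exact ⟨ε, hε, fun w hw hwε => h (by simpa [dist_zero_right] using hwε) hw⟩

/-- transfer a smallness statement to a largeness statement at infinity -/
private lemma for_large {p : ℂ → Prop} (h : ∀ᶠ v in nhdsWithin (0:ℂ) {(0:ℂ)}ᶜ, p v) :
    ∃ R : ℝ, 0 < R ∧ ∀ w : ℂ, R ≤ ‖w‖ → p w⁻¹ := by
  obtain ⟨ε, hε, h⟩ := eventually_small h
  refine ⟨ε⁻¹ + 1, by positivity, fun w hw => ?_⟩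
  have hw0 : w ≠ 0 := by
    intro h0; rw [h0] at hw; simp at hw; nlinarith [inv_pos.mpr hε]
  have hwinv : ‖w⁻¹‖ < ε := by
    rw [norm_inv]
    have h1 : ε⁻¹ < ‖w‖ := by nlinarith
    have h2 : (0:ℝ) < ‖w‖ := lt_trans (inv_pos.mpr hε) h1
    exact (inv_lt_comm₀ h2 hε).mpr h1
  exact h w⁻¹ (inv_ne_zero hw0) hwinv

private lemma case_fin_inf {g : ℂ → ℂ} {a b c₀ : ℂ} (hab : a ≠ b)
    (hg : ∀ w : ℂ, w ≠ 0 → DifferentiableAt ℂ g w)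
    (ha : ∀ w : ℂ, w ≠ 0 → g w ≠ a) (hb : ∀ w : ℂ, w ≠ 0 → g w ≠ b)
    (h0 : Tendsto g (nhdsWithin (0:ℂ) {(0:ℂ)}ᶜ) (nhds c₀))
    (hinf : Tendsto (fun w : ℂ => ‖g w⁻¹‖) (nhdsWithin (0:ℂ) {(0:ℂ)}ᶜ) atTop) : False := by
  -- pick an omitted value different from the limit c₀
  set a' : ℂ := if c₀ = a then b else a with ha'
  have ha'ne : a' ≠ c₀ := by
    rcases eq_or_ne c₀ a with h | h
    · rw [ha', if_pos h, h]; exact hab.symm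
    · rw [ha', if_neg h]; exact fun hEq => h hEq.symm
  have ha'avoid : ∀ w : ℂ, w ≠ 0 → g w ≠ a' := by
    intro w hw
    rcases eq_or_ne c₀ a with h | h
    · rw [ha', if_pos h]; exact hb w hw
    · rw [ha', if_neg h]; exact ha w hw
  have hc0a' : c₀ - a' ≠ 0 := sub_ne_zero.mpr (fun hEq => ha'ne hEq.symm)
  -- K : glued reciprocal
  set k : ℂ → ℂ := fun w => (g w - a')⁻¹ with hk
  have hkd : ∀ w : ℂ, w ≠ 0 → DifferentiableAt ℂ k w := by
    intro w hw
    exact ((hg w hw).sub_const a').inv (sub_ne_zero.mpr (ha'avoid w hw))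
  have hktend : Tendsto k (nhdsWithin (0:ℂ) {(0:ℂ)}ᶜ) (nhds (c₀ - a')⁻¹) :=
    (h0.sub_const a').inv₀ hc0a'
  set K : ℂ → ℂ := fun w => if w = 0 then (c₀ - a')⁻¹ else k w with hK
  have hKd : Differentiable ℂ K := glue_zero hkd hktend
  -- bound at infinity
  have hlarge : ∀ᶠ v in nhdsWithin (0:ℂ) {(0:ℂ)}ᶜ, ‖a'‖ + 1 ≤ ‖g v⁻¹‖ :=
    hinf.eventually (eventually_ge_atTop _)
  obtain ⟨R, hR, hRbig⟩ := for_large hlarge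
  have hKbound : ∀ w : ℂ, R ≤ ‖w‖ → ‖K w‖ ≤ 1 := by
    intro w hw
    have hw0 : w ≠ 0 := by intro h0; rw [h0] at hw; simp at hw; linarith
    have := hRbig w hw
    rw [inv_inv] at this
    have hga' : 1 ≤ ‖g w - a'‖ := by
      have h5 := norm_sub_norm_le (g w) a'
      linarith
    rw [hK]; simp only [if_neg hw0, hk, norm_inv]
    exact inv_le_one_of_one_le₀ hga'
  have hconst := const_of_bdd_ends hKd hKbound
  -- K is the nonzero constant (c₀ - a')⁻¹, but takes small values at infinity
  set C := ‖(c₀ - a')⁻¹‖ with hC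
  have hCpos : 0 < C := by rw [hC, norm_pos_iff]; exact inv_ne_zero hc0a'
  -- find w with ‖K w‖ < C
  have hlarge2 : ∀ᶠ v in nhdsWithin (0:ℂ) {(0:ℂ)}ᶜ, ‖a'‖ + C⁻¹ + 1 ≤ ‖g v⁻¹‖ :=
    hinf.eventually (eventually_ge_atTop _)
  obtain ⟨R2, hR2, hR2big⟩ := for_large hlarge2
  have hw0 : (R2 : ℂ) ≠ 0 := by
    simp only [ne_eq, Complex.ofReal_eq_zero]; linarith
  have hwnorm : R2 ≤ ‖(R2 : ℂ)‖ := by rw [Complex.norm_real]; simp [abs_of_pos hR2]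
  have h1 := hR2big (R2 : ℂ) hwnorm
  rw [inv_inv] at h1
  have h2 : C⁻¹ + 1 ≤ ‖g (R2:ℂ) - a'‖ := by
    have := norm_sub_norm_le (g (R2:ℂ)) a'; linarith
  have h3 : ‖K (R2:ℂ)‖ < C := by
    rw [hK]; simp only [if_neg hw0, hk, norm_inv]
    have hpos : (0:ℝ) < C⁻¹ + 1 := by positivity
    calc ‖g (R2:ℂ) - a'‖⁻¹ ≤ (C⁻¹ + 1)⁻¹ := by
          apply inv_anti₀ hpos h2
      _ < C := by
          rw [inv_lt_comm₀ (by positivity) hCpos]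
          nlinarith [inv_pos.mpr hCpos]
  have h4 : K (R2:ℂ) = K 0 := hconst _ _
  rw [h4] at h3
  have : K 0 = (c₀ - a')⁻¹ := by rw [hK]; simp
  rw [this] at h3
  exact absurd h3 (not_lt.mpr (le_of_eq hC))

private lemma no_inj_punctured {g : ℂ → ℂ} {a b : ℂ} (hab : a ≠ b)
    (hg : ∀ w : ℂ, w ≠ 0 → DifferentiableAt ℂ g w)
    (hinj : ∀ w₁ : ℂ, w₁ ≠ 0 → ∀ w₂ : ℂ, w₂ ≠ 0 → g w₁ = g w₂ → w₁ = w₂)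
    (ha : ∀ w : ℂ, w ≠ 0 → g w ≠ a) (hb : ∀ w : ℂ, w ≠ 0 → g w ≠ b) : False := by
  set g2 : ℂ → ℂ := fun w => g w⁻¹ with hg2def
  have hg2 : ∀ w : ℂ, w ≠ 0 → DifferentiableAt ℂ g2 w := by
    intro w hw
    exact (hg _ (inv_ne_zero hw)).comp w (differentiableAt_inv hw)
  have hinj2 : ∀ w₁ : ℂ, w₁ ≠ 0 → ∀ w₂ : ℂ, w₂ ≠ 0 → g2 w₁ = g2 w₂ → w₁ = w₂ := by
    intro w₁ h1 w₂ h2 hEq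
    have := hinj _ (inv_ne_zero h1) _ (inv_ne_zero h2) hEq
    rw [← inv_inv w₁, this, inv_inv]
  have ha2 : ∀ w : ℂ, w ≠ 0 → g2 w ≠ a := fun w hw => ha _ (inv_ne_zero hw)
  have hb2 : ∀ w : ℂ, w ≠ 0 → g2 w ≠ b := fun w hw => hb _ (inv_ne_zero hw)
  have hg2inv : (fun w : ℂ => g2 w⁻¹) = g := by
    funext w; rw [hg2def]; simp [inv_inv]
  rcases end_behavior hg hinj with ⟨c₀, h0⟩ | htop0
  · rcases end_behavior hg2 hinj2 with ⟨d₀, hinfy⟩ | htopinfy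
    · -- both ends finite : bounded entire, constant, contradicts injectivity
      set G : ℂ → ℂ := fun w => if w = 0 then c₀ else g w with hG
      have hGd : Differentiable ℂ G := glue_zero hg h0
      have hev : ∀ᶠ v in nhdsWithin (0:ℂ) {(0:ℂ)}ᶜ, ‖g2 v‖ ≤ ‖d₀‖ + 1 := by
        have := hinfy.norm.eventually (eventually_le_nhds (lt_add_one ‖d₀‖))
        exact this
      obtain ⟨R, hR, hRbig⟩ := for_large hev
      have hGb : ∀ w : ℂ, R ≤ ‖w‖ → ‖G w‖ ≤ ‖d₀‖ + 1 := by
        intro w hw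
        have hw0 : w ≠ 0 := by intro h0'; rw [h0'] at hw; simp at hw; linarith
        have := hRbig w hw
        rw [hg2def] at this
        simp only [inv_inv] at this
        rw [hG]; simp only [if_neg hw0]; exact this
      have hconst := const_of_bdd_ends hGd hGb
      have h12 : G 1 = G 2 := hconst _ _
      rw [hG] at h12
      simp only [if_neg (one_ne_zero : (1:ℂ) ≠ 0), if_neg (two_ne_zero : (2:ℂ) ≠ 0)] at h12
      have := hinj 1 one_ne_zero 2 two_ne_zero h12
      norm_num at this
    · exact case_fin_inf hab hg ha hb h0 htopinfy
  · rcases end_behavior hg2 hinj2 with ⟨d₀, hinfy⟩ | htopinfy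
    · -- swap roles via g2
      apply case_fin_inf hab hg2 ha2 hb2 hinfy
      apply htop0.congr
      intro w
      simp only [hg2def, inv_inv]
    · -- both ends infinite
      have hktend : Tendsto (fun w => (g w - a)⁻¹) (nhdsWithin (0:ℂ) {(0:ℂ)}ᶜ) (nhds 0) := by
        rw [tendsto_zero_iff_norm_tendsto_zero]
        have hga : Tendsto (fun w => ‖g w - a‖) (nhdsWithin (0:ℂ) {(0:ℂ)}ᶜ) atTop := by
          refine tendsto_atTop_mono' _ ?_ (tendsto_atTop_add_const_right _ (-(‖a‖)) htop0)
          filter_upwards with w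
          have := norm_sub_norm_le (g w) a
          show ‖g w‖ + -‖a‖ ≤ ‖g w - a‖
          linarith
        have := hga.inv_tendsto_atTop
        apply this.congr
        intro w; simp [norm_inv]
      set K : ℂ → ℂ := fun w => if w = 0 then 0 else (g w - a)⁻¹ with hK
      have hKd : Differentiable ℂ K := by
        apply glue_zero _ hktend
        intro w hw
        exact ((hg w hw).sub_const a).inv (sub_ne_zero.mpr (ha w hw))
      have hlarge : ∀ᶠ v in nhdsWithin (0:ℂ) {(0:ℂ)}ᶜ, ‖a‖ + 1 ≤ ‖g2 v‖ :=
        htopinfy.eventually (eventually_ge_atTop _)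
      obtain ⟨R, hR, hRbig⟩ := for_large hlarge
      have hKb : ∀ w : ℂ, R ≤ ‖w‖ → ‖K w‖ ≤ 1 := by
        intro w hw
        have hw0 : w ≠ 0 := by intro h0'; rw [h0'] at hw; simp at hw; linarith
        have h1 := hRbig w hw
        rw [hg2def] at h1; simp only [inv_inv] at h1
        have h2 : 1 ≤ ‖g w - a‖ := by
          have := norm_sub_norm_le (g w) a; linarith
        rw [hK]; simp only [if_neg hw0, norm_inv]
        exact inv_le_one_of_one_le₀ h2
      have hconst := const_of_bdd_ends hKd hKb
      have h10 : K 1 = K 0 := hconst _ _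
      rw [hK] at h10
      simp only [if_neg (one_ne_zero : (1:ℂ) ≠ 0), if_pos rfl] at h10
      exact (inv_ne_zero (sub_ne_zero.mpr (ha 1 one_ne_zero))) h10

private lemma no_inj_entire {f : ℂ → ℂ} {a : ℂ} (hf : Differentiable ℂ f)
    (hinj : Function.Injective f) (ha : ∀ t, f t ≠ a) : False := by
  set g : ℂ → ℂ := fun w => f w⁻¹ with hgdef
  have hg : ∀ w : ℂ, w ≠ 0 → DifferentiableAt ℂ g w :=
    fun w hw => (hf _).comp w (differentiableAt_inv hw)
  have hinj' : ∀ w₁ : ℂ, w₁ ≠ 0 → ∀ w₂ : ℂ, w₂ ≠ 0 → g w₁ = g w₂ → w₁ = w₂ := by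
    intro w₁ h1 w₂ h2 hEq
    have := hinj hEq
    rw [← inv_inv w₁, this, inv_inv]
  rcases end_behavior hg hinj' with ⟨c₀, h0⟩ | htop
  · -- f bounded at infinity → constant → contradiction with injectivity
    have hev : ∀ᶠ v in nhdsWithin (0:ℂ) {(0:ℂ)}ᶜ, ‖g v‖ ≤ ‖c₀‖ + 1 :=
      h0.norm.eventually (eventually_le_nhds (lt_add_one ‖c₀‖))
    obtain ⟨R, hR, hRbig⟩ := for_large hev
    have hfb : ∀ w : ℂ, R ≤ ‖w‖ → ‖f w‖ ≤ ‖c₀‖ + 1 := by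
      intro w hw
      have := hRbig w hw
      rw [hgdef] at this; simpa [inv_inv] using this
    have hconst := const_of_bdd_ends hf hfb
    have := hinj (hconst 1 2)
    norm_num at this
  · -- f → ∞ : K = (f - a)⁻¹ entire, → 0 at ∞, bounded ⇒ constant 0, contradiction
    set K : ℂ → ℂ := fun w => (f w - a)⁻¹ with hK
    have hKd : Differentiable ℂ K :=
      fun w => ((hf w).sub_const a).inv (sub_ne_zero.mpr (ha w))
    have hlarge : ∀ᶠ v in nhdsWithin (0:ℂ) {(0:ℂ)}ᶜ, ‖a‖ + 1 ≤ ‖g v‖ :=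
      htop.eventually (eventually_ge_atTop _)
    obtain ⟨R, hR, hRbig⟩ := for_large hlarge
    have hKb : ∀ w : ℂ, R ≤ ‖w‖ → ‖K w‖ ≤ 1 := by
      intro w hw
      have h1 := hRbig w hw
      rw [hgdef] at h1; simp only [inv_inv] at h1
      have h2 : 1 ≤ ‖f w - a‖ := by
        have := norm_sub_norm_le (f w) a; linarith
      rw [hK]; simp only [norm_inv]
      exact inv_le_one_of_one_le₀ h2
    have hconst := const_of_bdd_ends hKd hKb
    -- K constant with norm ≤ arbitrarily small ⇒ K 0 = 0, contradiction
    have hC : 0 < ‖K 0‖ := by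
      rw [hK, norm_pos_iff]
      exact inv_ne_zero (sub_ne_zero.mpr (ha 0))
    have hlarge2 : ∀ᶠ v in nhdsWithin (0:ℂ) {(0:ℂ)}ᶜ, ‖a‖ + ‖K 0‖⁻¹ + 1 ≤ ‖g v‖ :=
      htop.eventually (eventually_ge_atTop _)
    obtain ⟨R2, hR2, hR2big⟩ := for_large hlarge2
    have hwnorm : R2 ≤ ‖(R2 : ℂ)‖ := by rw [Complex.norm_real]; simp [abs_of_pos hR2]
    have h1 := hR2big (R2 : ℂ) hwnorm
    rw [hgdef] at h1; simp only [inv_inv] at h1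
    have h2 : ‖K 0‖⁻¹ + 1 ≤ ‖f (R2:ℂ) - a‖ := by
      have := norm_sub_norm_le (f (R2:ℂ)) a; linarith
    have h3 : ‖f (R2:ℂ) - a‖⁻¹ < ‖K 0‖ := by
      calc ‖f (R2:ℂ) - a‖⁻¹ ≤ (‖K 0‖⁻¹ + 1)⁻¹ := inv_anti₀ (by positivity) h2
        _ < ‖K 0‖ := by
            rw [inv_lt_comm₀ (by positivity) hC]
            nlinarith [inv_pos.mpr hC]
    have h4 : K (R2:ℂ) = K 0 := hconst _ _
    have h5 : ‖K (R2:ℂ)‖ = ‖f (R2:ℂ) - a‖⁻¹ := by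
      simp only [hK]; rw [norm_inv]
    rw [h4] at h5
    rw [← h5] at h3
    exact lt_irrefl _ h3

private lemma flow_translate {V f : ℂ → ℂ} {Ω : Set ℂ} (hΩ : IsOpen Ω)
    (hV : DifferentiableOn ℂ V Ω) (hmem : ∀ t, f t ∈ Ω)
    (hf : ∀ t, HasDerivAt f (V (f t)) t)
    {t₁ t₂ : ℂ} (h : f t₁ = f t₂) (s : ℂ) : f (t₁ + s) = f (t₂ + s) := by
  have hent : Differentiable ℂ f := fun t => (hf t).differentiableAt
  set F : ℂ → ℂ := fun s => f (t₁ + s) with hF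
  set G : ℂ → ℂ := fun s => f (t₂ + s) with hG
  have hFd : ∀ s, HasDerivAt F (V (F s)) s := by
    intro s
    have h1 := (hf (t₁ + s)).comp s ((hasDerivAt_id s).const_add t₁)
    simpa [hF, mul_one, Function.comp_def] using h1
  have hGd : ∀ s, HasDerivAt G (V (G s)) s := by
    intro s
    have h1 := (hf (t₂ + s)).comp s ((hasDerivAt_id s).const_add t₂)
    simpa [hG, mul_one, Function.comp_def] using h1
  -- Lipschitz neighbourhood of the common initial point
  set z₀ : ℂ := f t₁ with hz₀
  have hz₀Ω : z₀ ∈ Ω := hmem t₁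
  have hCD : ContDiffAt ℝ 1 V z₀ := by
    have han : AnalyticAt ℂ V z₀ := (hV.analyticOnNhd hΩ) z₀ hz₀Ω
    exact (han.contDiffAt (n := 1)).restrict_scalars ℝ
  obtain ⟨K, s0, hs0, hK⟩ := hCD.exists_lipschitzOnWith
  -- restrict to the real line
  set Fr : ℝ → ℂ := fun x => F x with hFr
  set Gr : ℝ → ℂ := fun x => G x with hGr
  have hFrd : ∀ x : ℝ, HasDerivAt Fr (V (Fr x)) x := fun x => (hFd x).comp_ofReal
  have hGrd : ∀ x : ℝ, HasDerivAt Gr (V (Gr x)) x := fun x => (hGd x).comp_ofReal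
  have hF0 : Fr 0 = z₀ := by simp [hFr, hF, hz₀]
  have hG0 : Gr 0 = z₀ := by
    simp only [hGr, hG, Complex.ofReal_zero, add_zero]
    exact h.symm
  have hFcont : ContinuousAt Fr 0 := (hFrd 0).differentiableAt.continuousAt
  have hGcont : ContinuousAt Gr 0 := (hGrd 0).differentiableAt.continuousAt
  have hFmem : ∀ᶠ x in nhds (0:ℝ), Fr x ∈ s0 := by
    have : Tendsto Fr (nhds 0) (nhds z₀) := hF0 ▸ hFcont
    exact this hs0
  have hGmem : ∀ᶠ x in nhds (0:ℝ), Gr x ∈ s0 := by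
    have : Tendsto Gr (nhds 0) (nhds z₀) := hG0 ▸ hGcont
    exact this hs0
  have huniq : Fr =ᶠ[nhds (0:ℝ)] Gr := by
    apply ODE_solution_unique_of_eventually (v := fun _ x => V x) (s := fun _ => s0)
      (K := K) (Filter.Eventually.of_forall (fun _ => hK))
    · filter_upwards [hFmem] with x hx
      exact ⟨hFrd x, hx⟩
    · filter_upwards [hGmem] with x hx
      exact ⟨hGrd x, hx⟩
    · rw [hF0, hG0]
  -- upgrade to an identity of entire functions
  obtain ⟨ε, hε, heq⟩ := Metric.eventually_nhds_iff.mp huniq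
  have hFan : AnalyticOnNhd ℂ F univ :=
    (analyticOnNhd_univ_iff_differentiable).mpr (fun s => (hFd s).differentiableAt)
  have hGan : AnalyticOnNhd ℂ G univ :=
    (analyticOnNhd_univ_iff_differentiable).mpr (fun s => (hGd s).differentiableAt)
  have hfreq : ∃ᶠ w in nhdsWithin (0:ℂ) {(0:ℂ)}ᶜ, F w = G w := by
    set u : ℕ → ℂ := fun n => ((ε / (n + 2) : ℝ) : ℂ) with hu
    have hupos : ∀ n : ℕ, (0:ℝ) < ε / (n + 2) := by
      intro n; positivity
    have hulim : Tendsto (fun n : ℕ => (ε / (n + 2) : ℝ)) atTop (nhds 0) := by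
      have h1 := (tendsto_const_div_atTop_nhds_zero_nat ε).comp (tendsto_add_atTop_nat 2)
      apply h1.congr
      intro n
      simp [Function.comp]
    have hu0 : Tendsto u atTop (nhdsWithin (0:ℂ) {(0:ℂ)}ᶜ) := by
      rw [tendsto_nhdsWithin_iff]
      constructor
      · have h2 := (Complex.continuous_ofReal.tendsto 0).comp hulim
        simp only [Complex.ofReal_zero] at h2
        exact h2
      · filter_upwards with n
        simp only [hu, mem_compl_iff, mem_singleton_iff, Complex.ofReal_eq_zero]
        exact ne_of_gt (hupos n)
    apply hu0.frequently
    apply Filter.Frequently.of_forall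
    intro n
    have hlt : dist (ε / (n+2) : ℝ) 0 < ε := by
      rw [Real.dist_eq, sub_zero, abs_of_pos (hupos n), div_lt_iff₀ (by positivity : (0:ℝ) < (n:ℝ)+2)]
      nlinarith [hupos n]
    have h3 := heq hlt
    simp only [hFr, hGr] at h3
    exact h3
  have : EqOn F G univ :=
    hFan.eqOn_of_preconnected_of_frequently_eq hGan isPreconnected_univ (mem_univ 0) hfreq
  exact this (mem_univ s)

private lemma core {V f : ℂ → ℂ} {Ω : Set ℂ} (hΩ : IsOpen Ω)
    (hV : DifferentiableOn ℂ V Ω) (hmem : ∀ t, f t ∈ Ω)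
    (hf : ∀ t, HasDerivAt f (V (f t)) t)
    {a b : ℂ} (hab : a ≠ b) (ha : ∀ t, f t ≠ a) (hb : ∀ t, f t ≠ b) (t : ℂ) :
    f t = f 0 := by
  by_contra hne
  have hent : Differentiable ℂ f := fun s => (hf s).differentiableAt
  have hAn : AnalyticOnNhd ℂ f univ := analyticOnNhd_univ_iff_differentiable.mpr hent
  -- the period group
  set Γ : AddSubgroup ℂ :=
    { carrier := {T : ℂ | ∀ t', f (t' + T) = f t'}
      zero_mem' := by intro t'; simp
      add_mem' := by
        intro T S hT hS t'
        have h1 : t' + (T + S) = (t' + S) + T := by ring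
        rw [h1, hT (t' + S), hS t']
      neg_mem' := by
        intro T hT t'
        have h1 := hT (t' + -T)
        rw [show t' + -T + T = t' by ring] at h1
        exact h1.symm } with hΓdef
  have hΓmem : ∀ {T : ℂ}, T ∈ Γ ↔ ∀ t', f (t' + T) = f t' := by
    intro T; rfl
  -- periods from coincidences
  have hΓofEq : ∀ {x y : ℂ}, f x = f y → y - x ∈ Γ := by
    intro x y hxy
    rw [hΓmem]
    intro t'
    have h1 := flow_translate hΩ hV hmem hf hxy (t' - x)
    rw [show x + (t' - x) = t' by ring, show y + (t' - x) = t' + (y - x) by ring] at h1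
    exact h1.symm
  -- no accumulation of periods (else f constant, contradicting hne)
  have hacc : ∀ c : ℂ, ¬ (∃ᶠ T in nhdsWithin c {c}ᶜ, T ∈ Γ) := by
    intro c hc
    set A : ℂ → ℂ := fun T => f (t + T) with hA
    have hAan : AnalyticOnNhd ℂ A univ :=
      analyticOnNhd_univ_iff_differentiable.mpr
        (fun T => (hent _).comp T ((differentiableAt_id).const_add t))
    have hBan : AnalyticOnNhd ℂ (fun _ : ℂ => f t) univ :=
      analyticOnNhd_univ_iff_differentiable.mpr (differentiable_const _)
    have hfreq : ∃ᶠ T in nhdsWithin c {c}ᶜ, A T = f t := by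
      apply hc.mono
      intro T hT
      exact (hΓmem.mp hT) t
    have hEq : EqOn A (fun _ => f t) univ :=
      hAan.eqOn_of_preconnected_of_frequently_eq hBan isPreconnected_univ (mem_univ c) hfreq
    have h1 : A (-t) = f t := hEq (mem_univ _)
    rw [hA] at h1
    simp only [add_neg_cancel] at h1
    exact hne h1.symm
  by_cases hA : ∀ T ∈ Γ, T = (0:ℂ)
  · -- injective case
    have hinj : Function.Injective f := by
      intro x y hxy
      have := hA _ (hΓofEq hxy)
      have h2 : y = x := by
        have h3 : y - x = 0 := this
        linear_combination h3
      exact h2.symm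
    exact no_inj_entire hent hinj ha
  · push_neg at hA
    obtain ⟨T', hT'Γ, hT'0⟩ := hA
    -- minimal nonzero period
    set S : Set ℂ := {T : ℂ | T ∈ Γ ∧ T ≠ 0 ∧ ‖T‖ ≤ ‖T'‖} with hS
    have hSfin : S.Finite := by
      by_contra hinf
      have hinf' : S.Infinite := hinf
      have hsub : S ⊆ closedBall (0:ℂ) ‖T'‖ := by
        intro T hT; rw [mem_closedBall, dist_zero_right]; exact hT.2.2
      obtain ⟨x, hxK, hxacc⟩ :=
        hinf'.exists_accPt_of_subset_isCompact (isCompact_closedBall (0:ℂ) ‖T'‖) hsub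
      apply hacc x
      rw [accPt_iff_frequently] at hxacc
      rw [frequently_nhdsWithin_iff]
      apply hxacc.mono
      intro y hy
      exact ⟨hy.2.1, by simpa using hy.1⟩
    have hT'S : T' ∈ S := ⟨hT'Γ, hT'0, le_refl _⟩
    obtain ⟨T₀, hT₀S, hT₀min⟩ := Set.exists_min_image S norm hSfin ⟨T', hT'S⟩
    obtain ⟨hT₀Γ, hT₀0, hT₀le⟩ := hT₀S
    have hT₀pos : 0 < ‖T₀‖ := norm_pos_iff.mpr hT₀0
    have hminall : ∀ T ∈ Γ, T ≠ 0 → ‖T₀‖ ≤ ‖T‖ := by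
      intro T hT hT0
      rcases le_or_gt ‖T‖ ‖T'‖ with hle | hgt
      · exact hT₀min T ⟨hT, hT0, hle⟩
      · linarith
    by_cases hB1 : ∃ T1 ∈ Γ, ((T1 : ℂ) / T₀).im ≠ 0
    · -- two independent periods : f is bounded, hence constant. Contradiction.
      obtain ⟨T1, hT1Γ, hT1im⟩ := hB1
      have hbound : ∀ τ : ℂ, ∃ σ : ℂ, ‖σ‖ ≤ ‖T₀‖ + ‖T1‖ ∧ f τ = f σ := by
        intro τ
        set c : ℂ := T1 / T₀ with hc
        set y : ℝ := (τ / T₀).im / c.im with hy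
        set x : ℝ := (τ / T₀).re - y * c.re with hx
        have hxy : (x:ℂ) + (y:ℂ) * c = τ / T₀ := by
          apply Complex.ext
          · simp only [Complex.add_re, Complex.ofReal_re, Complex.mul_re, Complex.ofReal_im,
              zero_mul, sub_zero]
            rw [hx]; ring
          · simp only [Complex.add_im, Complex.ofReal_im, Complex.mul_im, Complex.ofReal_re,
              zero_mul, add_zero, zero_add]
            rw [hy]; field_simp
        have hτ : τ = (x:ℂ) * T₀ + (y:ℂ) * T1 := by
          have h1 : ((x:ℂ) + (y:ℂ) * c) * T₀ = τ := by
            rw [hxy]; field_simp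
          rw [← h1, hc]; field_simp
        set m : ℤ := ⌊x⌋ with hm
        set n : ℤ := ⌊y⌋ with hn
        have hTpΓ : ((m:ℂ) * T₀ + (n:ℂ) * T1) ∈ Γ := by
          apply add_mem
          · have := zsmul_mem hT₀Γ m; rwa [zsmul_eq_mul] at this
          · have := zsmul_mem hT1Γ n; rwa [zsmul_eq_mul] at this
        refine ⟨τ - ((m:ℂ) * T₀ + (n:ℂ) * T1), ?_, ?_⟩
        · have heq : τ - ((m:ℂ) * T₀ + (n:ℂ) * T1)
              = ((x - m : ℝ):ℂ) * T₀ + ((y - n : ℝ):ℂ) * T1 := by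
            rw [hτ]; push_cast; ring
          rw [heq]
          have h1 : ‖((x - m : ℝ):ℂ) * T₀‖ ≤ ‖T₀‖ := by
            rw [norm_mul, Complex.norm_real, Real.norm_eq_abs]
            have habs : |x - (m:ℝ)| ≤ 1 := by
              have h6 := Int.fract_nonneg x
              have h7 := Int.fract_lt_one x
              rw [hm, Int.self_sub_floor, _root_.abs_of_nonneg h6]
              linarith
            nlinarith [norm_nonneg T₀]
          have h2 : ‖((y - n : ℝ):ℂ) * T1‖ ≤ ‖T1‖ := by
            rw [norm_mul, Complex.norm_real, Real.norm_eq_abs]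
            have habs : |y - (n:ℝ)| ≤ 1 := by
              have h6 := Int.fract_nonneg y
              have h7 := Int.fract_lt_one y
              rw [hn, Int.self_sub_floor, _root_.abs_of_nonneg h6]
              linarith
            nlinarith [norm_nonneg T1]
          calc ‖_ + _‖ ≤ _ := norm_add_le _ _
            _ ≤ ‖T₀‖ + ‖T1‖ := add_le_add h1 h2
        · have := (hΓmem.mp hTpΓ) (τ - ((m:ℂ) * T₀ + (n:ℂ) * T1))
          rw [show τ - ((m:ℂ) * T₀ + (n:ℂ) * T1) + ((m:ℂ) * T₀ + (n:ℂ) * T1) = τ by ring] at this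
          exact this
      have hbdd : IsBounded (range f) := by
        have hsub : range f ⊆ f '' (closedBall (0:ℂ) (‖T₀‖ + ‖T1‖)) := by
          rintro _ ⟨τ, rfl⟩
          obtain ⟨σ, hσ, hEq⟩ := hbound τ
          exact ⟨σ, by rwa [mem_closedBall, dist_zero_right], hEq.symm⟩
        exact (((isCompact_closedBall _ _).image hent.continuous).isBounded).subset hsub
      exact hne (hent.apply_eq_apply_of_bounded hbdd t 0)
    · -- all periods are integer multiples of T₀
      push_neg at hB1
      have hΓint : ∀ T ∈ Γ, ∃ n : ℤ, T = (n:ℂ) * T₀ := by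
        intro T hT
        set lam : ℝ := (T / T₀).re with hlam
        have hTeq : T = (lam:ℂ) * T₀ := by
          have h1 : T / T₀ = (lam:ℂ) := by
            apply Complex.ext
            · simp [hlam]
            · simp [hB1 T hT]
          calc T = (T / T₀) * T₀ := by field_simp
            _ = (lam:ℂ) * T₀ := by rw [h1]
        set n : ℤ := ⌊lam⌋ with hn
        refine ⟨n, ?_⟩
        by_contra hneq
        have hTm : T - (n:ℂ) * T₀ ∈ Γ := by
          apply sub_mem hT
          have := zsmul_mem hT₀Γ n; rwa [zsmul_eq_mul] at this
        have hTm0 : T - (n:ℂ) * T₀ ≠ 0 := by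
          intro h0
          apply hneq
          have : T = (n:ℂ) * T₀ := by linear_combination h0
          exact this
        have h2 := hminall _ hTm hTm0
        have h3 : T - (n:ℂ) * T₀ = ((lam - n : ℝ):ℂ) * T₀ := by
          rw [hTeq]; push_cast; ring
        rw [h3, norm_mul, Complex.norm_real, Real.norm_eq_abs] at h2
        have h4 : |lam - (n:ℝ)| < 1 := by
          rw [hn, Int.self_sub_floor, _root_.abs_of_nonneg (Int.fract_nonneg lam)]
          exact Int.fract_lt_one lam
        nlinarith [abs_nonneg (lam - (n:ℝ))]
      -- build the injective function on the punctured plane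
      set cc : ℂ := T₀ / (2 * (Real.pi : ℂ) * Complex.I) with hcc
      have h2πI : (2 * (Real.pi : ℂ) * Complex.I) ≠ 0 := Complex.two_pi_I_ne_zero
      have hcc0 : cc ≠ 0 := div_ne_zero hT₀0 h2πI
      set g : ℂ → ℂ := fun w => f (cc * Complex.log w) with hg
      have hlog : ∀ L1 L2 : ℂ, Complex.exp L1 = Complex.exp L2 →
          f (cc * L1) = f (cc * L2) := by
        intro L1 L2 hEq
        have h1 : Complex.exp (L1 - L2) = 1 := by
          rw [Complex.exp_sub, hEq, div_self (Complex.exp_ne_zero L2)]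
        obtain ⟨n, hn⟩ := Complex.exp_eq_one_iff.mp h1
        have h2 : cc * L1 = cc * L2 + (n:ℂ) * T₀ := by
          have : cc * (L1 - L2) = (n:ℂ) * T₀ := by
            rw [hn, hcc]; field_simp
          linear_combination this
        have h3 : ((n:ℂ) * T₀) ∈ Γ := by
          have := zsmul_mem hT₀Γ n; rwa [zsmul_eq_mul] at this
        rw [h2]
        exact (hΓmem.mp h3) (cc * L2)
      have hgd : ∀ w : ℂ, w ≠ 0 → DifferentiableAt ℂ g w := by
        intro w₀ hw₀
        have hEqn : ∀ w : ℂ, w ≠ 0 →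
            g w = f (cc * (Complex.log (w / w₀) + Complex.log w₀)) := by
          intro w hw
          apply hlog
          rw [Complex.exp_log hw, Complex.exp_add, Complex.exp_log (div_ne_zero hw hw₀),
            Complex.exp_log hw₀]
          field_simp
        have hdiff : DifferentiableAt ℂ
            (fun w => f (cc * (Complex.log (w / w₀) + Complex.log w₀))) w₀ := by
          apply (hent _).comp
          apply DifferentiableAt.const_mul
          apply DifferentiableAt.add_const
          have h1 : w₀ / w₀ ∈ Complex.slitPlane := by
            rw [div_self hw₀]; exact Complex.one_mem_slitPlane
          have h2 : DifferentiableAt ℂ (fun w : ℂ => w / w₀) w₀ :=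
            differentiableAt_id.div_const w₀
          exact DifferentiableAt.comp (𝕜 := ℂ) (g := Complex.log)
            (f := fun w : ℂ => w / w₀) w₀ (Complex.differentiableAt_log h1) h2
        apply hdiff.congr_of_eventuallyEq
        filter_upwards [isOpen_compl_singleton.mem_nhds (by simpa using hw₀ : w₀ ∈ ({(0:ℂ)}ᶜ : Set ℂ))] with w hw
        exact hEqn w (by simpa using hw)
      have hginj : ∀ w₁ : ℂ, w₁ ≠ 0 → ∀ w₂ : ℂ, w₂ ≠ 0 → g w₁ = g w₂ → w₁ = w₂ := by
        intro w₁ h1 w₂ h2 hEq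
        have h3 : cc * Complex.log w₂ - cc * Complex.log w₁ ∈ Γ := hΓofEq hEq
        obtain ⟨n, hn⟩ := hΓint _ h3
        have h4 : Complex.log w₂ - Complex.log w₁ = (n:ℂ) * (2 * (Real.pi:ℂ) * Complex.I) := by
          have h5 : cc * (Complex.log w₂ - Complex.log w₁)
              = (n:ℂ) * (cc * (2 * (Real.pi:ℂ) * Complex.I)) := by
            have h6 : cc * (2 * (Real.pi:ℂ) * Complex.I) = T₀ := by
              rw [hcc]; field_simp
            rw [h6]
            linear_combination hn
          have := mul_left_cancel₀ hcc0 (by linear_combination h5 :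
            cc * (Complex.log w₂ - Complex.log w₁) = cc * ((n:ℂ) * (2 * (Real.pi:ℂ) * Complex.I)))
          exact this
        have h7 : Complex.exp (Complex.log w₂) = Complex.exp (Complex.log w₁) := by
          rw [show Complex.log w₂ = Complex.log w₁ + (n:ℂ) * (2 * (Real.pi:ℂ) * Complex.I) by
            linear_combination h4]
          rw [Complex.exp_add, Complex.exp_int_mul_two_pi_mul_I, mul_one]
        rw [Complex.exp_log h2, Complex.exp_log h1] at h7
        exact h7.symm
      exact no_inj_punctured hab hgd hginj
        (fun w _ => ha _) (fun w _ => hb _)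

end

end AuxiliaryPicardLindelofRigidity

/-- The graph of the meromorphic function `s = q/q₁` over the points where it is finite. -/
def grph (q q₁ : ℂ → ℂ) : Set (ℂ × ℂ) :=
  {p : ℂ × ℂ | q₁ p.1 ≠ 0 ∧ q₁ p.1 * p.2 = q p.1}

/-- `ℂ` minus `k ≥ 2` points carries no nonzero complete holomorphic vector
field; consequently if `s` has at least two poles there is no complete holomorphic
vector field on `ℂ²` tangent to `graph(s)` and not identically zero on `graph(s)`. -/
theorem stmt_9
    -- first part: ℂ minus a finite set of at least two points
    (P : Set ℂ) (hPfin : P.Finite) (hP2 : 2 ≤ P.ncard)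
    (v : ℂ → ℂ) (hv : DifferentiableOn ℂ v Pᶜ)
    (φ : ℂ → ℂ → ℂ)
    (hφ0 : ∀ z ∉ P, φ 0 z = z)
    (hφmem : ∀ z ∉ P, ∀ t : ℂ, φ t z ∉ P)
    (hφ : ∀ z ∉ P, ∀ t : ℂ, HasDerivAt (fun τ => φ τ z) (v (φ t z)) t)
    -- second part: a meromorphic function with at least two poles
    (q q₁ : ℂ → ℂ) (hq : Differentiable ℂ q) (hq₁ : Differentiable ℂ q₁)
    (hnc : ∀ z : ℂ, ¬(q z = 0 ∧ q₁ z = 0))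
    (hpoles : 2 ≤ ({z : ℂ | q₁ z = 0}).ncard)
    (X : ℂ × ℂ → ℂ × ℂ) (hX : Differentiable ℂ X)
    (Φ : ℂ → ℂ × ℂ → ℂ × ℂ)
    (hΦ0 : ∀ p, Φ 0 p = p)
    (hΦ : ∀ p t, HasDerivAt (fun τ => Φ τ p) (X (Φ t p)) t)
    (htan : ∀ t p, p ∈ grph q q₁ → Φ t p ∈ grph q q₁) :
    (∀ z ∉ P, v z = 0) ∧ (∀ p ∈ grph q q₁, X p = 0) := by
  constructor
  · -- first part
    intro z hz
    have hPc : IsOpen Pᶜ := hPfin.isClosed.isOpen_compl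
    obtain ⟨a, haP, b, hbP, hab⟩ := (Set.one_lt_ncard hPfin).mp (by omega)
    have hconst : ∀ t : ℂ, φ t z = φ 0 z :=
      core hPc hv (fun t => hφmem z hz t) (hφ z hz) hab
        (fun t => fun h => hφmem z hz t (h ▸ haP))
        (fun t => fun h => hφmem z hz t (h ▸ hbP))
    have h0 : HasDerivAt (fun τ => φ τ z) (v (φ 0 z)) 0 := hφ z hz 0
    have hceq : (fun τ => φ τ z) = fun _ => φ 0 z := funext hconst
    rw [hceq] at h0
    have := (hasDerivAt_const (0:ℂ) (φ 0 z)).unique h0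
    rw [hφ0 z hz] at this
    exact this.symm
  · -- second part
    intro p hp
    set Pz : Set ℂ := {z : ℂ | q₁ z = 0} with hPz
    have hPzfin : Pz.Finite := by
      by_contra hinf
      rw [Set.Infinite.ncard hinf] at hpoles; omega
    obtain ⟨a, haP, b, hbP, hab⟩ := (Set.one_lt_ncard hPzfin).mp (by omega)
    have hΩ : IsOpen Pzᶜ := hPzfin.isClosed.isOpen_compl
    set V : ℂ → ℂ := fun x => (X (x, q x / q₁ x)).1 with hV
    have hVd : DifferentiableOn ℂ V Pzᶜ := by
      intro x hx
      have hq₁x : q₁ x ≠ 0 := hx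
      exact (((hX _).comp x ((differentiableAt_id.prodMk
        ((hq.differentiableAt.div hq₁.differentiableAt hq₁x))))).fst).differentiableWithinAt
    set f : ℂ → ℂ := fun t => (Φ t p).1 with hfdef
    have hmemf : ∀ t, f t ∈ Pzᶜ := fun t => (htan t p hp).1
    have hgraph : ∀ t, Φ t p = (f t, q (f t) / q₁ (f t)) := by
      intro t
      have h1 := (htan t p hp).1
      have h2 := (htan t p hp).2
      have : (Φ t p).2 = q (f t) / q₁ (f t) := by
        rw [eq_div_iff h1]; linear_combination h2
      exact Prod.ext rfl this
    have hfd : ∀ t, HasDerivAt f (V (f t)) t := by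
      intro t
      have h1 : HasDerivAt (fun τ => Φ τ p) (X (Φ t p)) t := hΦ p t
      have h2 : HasDerivAt f ((X (Φ t p)).1) t :=
        (ContinuousLinearMap.fst ℂ ℂ ℂ).hasFDerivAt.comp_hasDerivAt t h1
      rwa [hgraph t] at h2
    have hconst : ∀ t : ℂ, f t = f 0 :=
      core hΩ hVd hmemf hfd hab
        (fun t h => hmemf t (by rw [h]; exact haP))
        (fun t h => hmemf t (by rw [h]; exact hbP))
    have hΦconst : ∀ t : ℂ, Φ t p = p := by
      intro t
      have h1 : f 0 = p.1 := by simp [hfdef, hΦ0]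
      have h2 : Φ t p = (p.1, q p.1 / q₁ p.1) := by
        rw [hgraph t, hconst t, h1]
      have h3 : p.2 = q p.1 / q₁ p.1 := by
        rw [eq_div_iff hp.1]; linear_combination hp.2
      rw [h2, ← h3]
    have h0 : HasDerivAt (fun τ => Φ τ p) (X (Φ 0 p)) 0 := hΦ p 0
    have hceq : (fun τ => Φ τ p) = fun _ => p := funext hΦconst
    rw [hceq, hΦ0] at h0
    exact (h0.unique (hasDerivAt_const _ _))
end

section
/- Let s : ℂ → ℂ be entire and b ∈ ℂ*. The vector field X = φ_*(b ∂/∂x + A(x)t ∂/∂t), where φ(x,t) = (x, t + s(x)) and A is a nonzero polynomial, is a complete holomorphic vector field on ℂ² tangent to graph(s), all of whose trajectories are proper and biholomorphic to ℂ. -/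
open Complex

open Polynomial in
lemma exists_antideriv (A : Polynomial ℂ) : ∃ F : Polynomial ℂ, derivative F = A := by
  refine ⟨∑ n ∈ A.support, C (A.coeff n / (n+1)) * X^(n+1), ?_⟩
  rw [map_sum]
  conv_rhs => rw [A.as_sum_support]
  refine Finset.sum_congr rfl fun n _ => ?_
  have h : ((n : ℂ) + 1) ≠ 0 := Nat.cast_add_one_ne_zero n
  rw [derivative_C_mul, derivative_X_pow, ← mul_assoc, ← C_mul, Nat.add_sub_cancel]
  rw [show A.coeff n / (↑n + 1) * ↑(n + 1) = A.coeff n by push_cast; field_simp]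
  rw [C_mul_X_pow_eq_monomial]

/-- for `b ≠ 0`, the push-forward `X = φ_*(b∂/∂x + A(x)t∂/∂t)` with
`φ(x,t) = (x, t + s(x))` is a complete holomorphic vector field tangent to `graph(s)`
all of whose trajectories are proper (closed in ℂ²) and biholomorphic to ℂ. -/
theorem stmt_11 (s : ℂ → ℂ) (hs : Differentiable ℂ s)
    (b : ℂ) (hb : b ≠ 0) (A : Polynomial ℂ) (hA : A ≠ 0) :
    letI Y : ℂ × ℂ → ℂ × ℂ := fun p =>
      (b, A.eval p.1 * (p.2 - s p.1) + deriv s p.1 * b)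
    -- X = φ_*X₁ is holomorphic on ℂ²
    Differentiable ℂ Y ∧
    ∃ Ψ : ℂ → ℂ × ℂ → ℂ × ℂ,
      -- complete: Ψ is a global flow of Y
      (∀ p, Ψ 0 p = p) ∧
      (∀ p t, HasDerivAt (fun τ => Ψ τ p) (Y (Ψ t p)) t) ∧
      -- tangent to graph(s)
      (∀ t : ℂ, ∀ p : ℂ × ℂ, p.2 = s p.1 → (Ψ t p).2 = s (Ψ t p).1) ∧
      -- every trajectory is proper and biholomorphic to ℂ
      (∀ p : ℂ × ℂ, Function.Injective (fun t => Ψ t p) ∧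
        IsClosed (Set.range (fun t => Ψ t p))) := by
  set Y : ℂ × ℂ → ℂ × ℂ := fun p =>
    (b, A.eval p.1 * (p.2 - s p.1) + deriv s p.1 * b) with hY
  obtain ⟨F, hF⟩ := exists_antideriv A
  have hsd : Differentiable ℂ (deriv s) := by
    have h := (contDiff_infty_iff_deriv.mp hs.contDiff).2
    exact h.differentiable (by simp)
  constructor
  · apply Differentiable.prodMk
    · exact differentiable_const b
    · exact ((A.differentiable.comp differentiable_fst).mul
        (differentiable_snd.sub (hs.comp differentiable_fst))).add
        ((hsd.comp differentiable_fst).mul (differentiable_const b))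
  · refine ⟨fun τ p => (p.1 + b * τ,
      (p.2 - s p.1) * Complex.exp ((F.eval (p.1 + b * τ) - F.eval p.1) / b) + s (p.1 + b * τ)), ?_, ?_, ?_, ?_⟩
    · intro p; simp
    · intro p t
      have h1 : HasDerivAt (fun τ : ℂ => p.1 + b * τ) b t := by
        simpa using ((hasDerivAt_id t).const_mul b).const_add p.1
      have hF1 : HasDerivAt (fun τ : ℂ => (F.eval (p.1 + b * τ) - F.eval p.1) / b)
          (A.eval (p.1 + b * t)) t := by
        have := (F.hasDerivAt (p.1 + b * t)).comp t h1
        rw [hF] at this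
        have h2 := (this.sub_const (F.eval p.1)).div_const b
        simpa [mul_div_assoc, mul_div_cancel_left₀ _ hb, mul_comm] using h2
      have hexp : HasDerivAt (fun τ : ℂ => Complex.exp ((F.eval (p.1 + b * τ) - F.eval p.1) / b))
          (Complex.exp ((F.eval (p.1 + b * t) - F.eval p.1) / b) * A.eval (p.1 + b * t)) t :=
        (Complex.hasDerivAt_exp _).comp t hF1
      have hs1 : HasDerivAt (fun τ : ℂ => s (p.1 + b * τ))
          (deriv s (p.1 + b * t) * b) t :=
        ((hs (p.1 + b * t)).hasDerivAt).comp t h1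
      have h2 := ((hexp.const_mul (p.2 - s p.1)).add hs1)
      refine (h1.prodMk h2).congr_deriv ?_
      simp only [Y]
      refine Prod.ext rfl ?_
      simp only
      ring
    · intro t p hp
      simp [hp]
    · intro p
      constructor
      · intro a c h
        have := congrArg Prod.fst h
        simp only at this
        exact mul_left_cancel₀ hb (by linear_combination this)
      · have : Set.range (fun t => (p.1 + b * t,
            (p.2 - s p.1) * Complex.exp ((F.eval (p.1 + b * t) - F.eval p.1) / b) + s (p.1 + b * t))) =
            {q : ℂ × ℂ | q.2 = (p.2 - s p.1) * Complex.exp ((F.eval q.1 - F.eval p.1) / b) + s q.1} := by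
          ext q
          constructor
          · rintro ⟨t, rfl⟩; rfl
          · rintro hq
            refine ⟨(q.1 - p.1) / b, ?_⟩
            have hx : p.1 + b * ((q.1 - p.1) / b) = q.1 := by field_simp; ring
            simp only [hx]
            exact Prod.ext rfl hq.symm
        rw [this]
        exact isClosed_eq continuous_snd (by have := hs.continuous; fun_prop)
end

section
/- Let s : ℂ → ℙ¹ be meromorphic with a single pole at z = 0 of order k, so s(z) = s₀(z)/z^k with s₀ entire and s₀(0) ≠ 0. Write h = s - 1/g with g(z) = z^k e^{-g₁(z)} for an entire g₁ chosen so that h is entire. Then φ(z,w) = (z, e^{-g₁(z)}(w - h(z))) is a fiber-preserving holomorphic automorphism of ℂ² with inverse φ⁻¹(x,y) = (x, e^{g₁(x)}y + h(x)) which maps graph(s) onto graph(1/z^k), i.e. φ(z, s(z)) = (z, 1/z^k) for all z ≠ 0. -/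
open Complex

/-- with `s(z) = s₀(z)/z^k`, `g(z) = z^k e^{-g₁(z)}` and `h = s - 1/g`
entire, the map `φ(z,w) = (z, e^{-g₁(z)}(w - h(z)))` is a fiber-preserving holomorphic
automorphism of ℂ² with inverse `φ⁻¹(x,y) = (x, e^{g₁(x)}y + h(x))`, mapping
`graph(s)` onto `graph(1/z^k)`. -/
theorem stmt_12 (k : ℕ) (hk : 0 < k) (s₀ g₁ h : ℂ → ℂ)
    (hs₀ : Differentiable ℂ s₀) (hs₀0 : s₀ 0 ≠ 0)
    (hg₁ : Differentiable ℂ g₁) (hh : Differentiable ℂ h)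
    -- h = s - 1/g is the entire extension of s(z) - e^{g₁(z)}/z^k
    (hrel : ∀ z : ℂ, z ≠ 0 → h z = s₀ z / z ^ k - Complex.exp (g₁ z) / z ^ k) :
    letI φ : ℂ × ℂ → ℂ × ℂ := fun p => (p.1, Complex.exp (-(g₁ p.1)) * (p.2 - h p.1))
    letI ψ : ℂ × ℂ → ℂ × ℂ := fun p => (p.1, Complex.exp (g₁ p.1) * p.2 + h p.1)
    Differentiable ℂ φ ∧ Differentiable ℂ ψ ∧
    (∀ p, ψ (φ p) = p) ∧ (∀ p, φ (ψ p) = p) ∧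
    -- φ maps graph(s) onto graph(1/z^k): φ(z, s(z)) = (z, 1/z^k) for z ≠ 0
    (∀ z : ℂ, z ≠ 0 → φ (z, s₀ z / z ^ k) = (z, 1 / z ^ k)) := by
  refine ⟨?_, ?_, ?_, ?_, ?_⟩
  · exact differentiable_fst.prodMk
      (((hg₁.comp differentiable_fst).neg.cexp).mul
        (differentiable_snd.sub (hh.comp differentiable_fst)))
  · exact differentiable_fst.prodMk
      ((((hg₁.comp differentiable_fst).cexp).mul differentiable_snd).add
        (hh.comp differentiable_fst))
  · intro p
    simp [← mul_assoc, ← Complex.exp_add]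
  · intro p
    simp [add_sub_cancel_right, ← mul_assoc, ← Complex.exp_add]
  · intro z hz
    simp only [Prod.mk.injEq, true_and]
    rw [hrel z hz]
    have : s₀ z / z ^ k - (s₀ z / z ^ k - Complex.exp (g₁ z) / z ^ k)
        = Complex.exp (g₁ z) / z ^ k := by ring
    rw [this, mul_div_assoc', ← Complex.exp_add]
    simp
end

section
/- Let α : ℂ* × ℂ → ℂ* × ℂ be the biholomorphism α(x,t) = (x, t + 1/x^k), and let X₁ = ax ∂/∂x + A(x)t ∂/∂t with a ∈ ℂ and A(z) = -ak + A₀(z), A₀ ∈ z^k·ℂ[z]. Then the push-forward α_*X₁, a priori holomorphic only on ℂ* × ℂ, extends to the polynomial vector field Y₀ = az ∂/∂z + (A(z)w + (-(ak + A(z)))/z^k) ∂/∂w, which is holomorphic on all of ℂ² and tangent to the curve {w z^k = 1}. -/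
open Complex Polynomial

/-- with `A(z) = -ak + A₀(z)`, `A₀ ∈ z^k ℂ[z]`, the push-forward by
`α(x,t) = (x, t + 1/x^k)` of `X₁ = ax∂/∂x + A(x)t∂/∂t` extends from `ℂ* × ℂ` to the
polynomial vector field `Y₀ = az∂/∂z + (A(z)w - (ak + A(z))/z^k)∂/∂w`, holomorphic on
all of ℂ² and tangent to the curve `{wz^k = 1}`. -/
theorem stmt_13 (k : ℕ) (hk : 0 < k) (a : ℂ) (A₀ : Polynomial ℂ)
    (hdvd : (X : Polynomial ℂ) ^ k ∣ A₀) :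
    ∃ B : Polynomial ℂ, A₀ = X ^ k * B ∧
      letI A : Polynomial ℂ := C (-(a * (k : ℂ))) + A₀
      letI Y₀ : ℂ × ℂ → ℂ × ℂ := fun p => (a * p.1, A.eval p.1 * p.2 - B.eval p.1)
      -- Y₀ is holomorphic (polynomial) on all of ℂ²
      Differentiable ℂ Y₀ ∧
      -- on z ≠ 0 it agrees with the push-forward α_*X₁
      (∀ z w : ℂ, z ≠ 0 →
        Y₀ (z, w) = (a * z,
          A.eval z * (w - 1 / z ^ k) + (-(k : ℂ) / z ^ (k + 1)) * (a * z))) ∧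
      -- Y₀ is tangent to {wz^k - 1 = 0}: the derivative of wz^k - 1 along Y₀
      -- vanishes on the curve
      (∀ z w : ℂ, w * z ^ k = 1 →
        (k : ℂ) * z ^ (k - 1) * w * (a * z) + z ^ k * (A.eval z * w - B.eval z) = 0) := by
  obtain ⟨B, hB⟩ := hdvd
  refine ⟨B, hB, ?_, ?_, ?_⟩
  · exact (differentiable_fst.const_mul a).prodMk
      ((((C (-(a * (k : ℂ))) + A₀).differentiable.comp differentiable_fst).mul
        differentiable_snd).sub (B.differentiable.comp differentiable_fst))
  · intro z w hz
    have hA₀ : A₀.eval z = z ^ k * B.eval z := by rw [hB]; simp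
    have hzk : z ^ k ≠ 0 := pow_ne_zero _ hz
    have hzk1 : z ^ (k + 1) ≠ 0 := pow_ne_zero _ hz
    simp only [Prod.mk.injEq, eval_add, eval_C, hA₀, pow_succ]
    refine ⟨trivial, ?_⟩
    field_simp
    ring
  · intro z w hw
    have hz : z ≠ 0 := by
      intro h
      rw [h, zero_pow hk.ne', mul_zero] at hw
      exact zero_ne_one hw
    have hA₀ : A₀.eval z = z ^ k * B.eval z := by rw [hB]; simp
    have hpow : z ^ (k - 1) * z = z ^ k := by
      rw [← pow_succ]; congr 1; omega
    simp only [eval_add, eval_C, hA₀]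
    calc (k : ℂ) * z ^ (k - 1) * w * (a * z) +
          z ^ k * ((-(a * k) + z ^ k * B.eval z) * w - B.eval z)
        = a * k * (w * (z ^ (k-1) * z)) + (-(a*k)) * (w * z^k)
          + B.eval z * z^k * (w * z^k - 1) := by ring
      _ = 0 := by rw [hpow, hw]; ring
end

section
/- Let r, s ∈ ℕ⁺ with (r,s) = 1 and rs ≠ 1, a ∈ ℂ*, and C = {(x,y) ∈ ℂ² : y^r = a x^s, (x,y) ≠ (0,0)}. Then there exists a holomorphic map Γ : ℂ² → ℂ² with Jacobian determinant not identically zero whose image is contained in ℂ² \ C; in fact Γ = γ ∘ F where F : ℂ² → ℂ² \ {v = a} is a surjective dominating map and γ(u,v) = (v^q u^r, v^p u^s) with pr - qs = 1. -/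
open Complex

/-- for `C = {y^r = ax^s} \ {(0,0)}` with `(r,s) = 1`, `rs ≠ 1`, `a ≠ 0`,
there is a dominating map `Γ = γ ∘ F : ℂ² → ℂ² \ C`, where `F` is a surjective
dominating map onto `ℂ² \ {v = a}` and `γ(u,v) = (v^q u^r, v^p u^s)` with `pr - qs = 1`. -/
theorem stmt_17 (r s : ℕ) (hr : 0 < r) (hs : 0 < s) (hcop : Nat.Coprime r s)
    (hrs : r * s ≠ 1) (a : ℂ) (ha : a ≠ 0) :
    ∃ (Γ F : ℂ × ℂ → ℂ × ℂ) (p q : ℕ),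
      p * r = q * s + 1 ∧
      Differentiable ℂ F ∧ Differentiable ℂ Γ ∧
      -- F is a surjective dominating map onto ℂ² \ {v = a}
      Set.range F = {v : ℂ × ℂ | v.2 ≠ a} ∧
      -- Γ = γ ∘ F with γ(u,v) = (v^q u^r, v^p u^s)
      (∀ w : ℂ × ℂ, Γ w = ((F w).2 ^ q * (F w).1 ^ r, (F w).2 ^ p * (F w).1 ^ s)) ∧
      -- the image of Γ avoids C = {y^r = ax^s} \ {(0,0)}
      Set.range Γ ⊆ {x : ℂ × ℂ | ¬(x.2 ^ r = a * x.1 ^ s ∧ x ≠ (0, 0))} ∧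
      -- the Jacobian determinant of Γ is not identically zero
      (∃ w : ℂ × ℂ,
        (fderiv ℂ Γ w (1, 0)).1 * (fderiv ℂ Γ w (0, 1)).2 -
          (fderiv ℂ Γ w (0, 1)).1 * (fderiv ℂ Γ w (1, 0)).2 ≠ 0) := by
  obtain ⟨p, q, hpq⟩ : ∃ p q : ℕ, p * r = q * s + 1 := by
    by_cases h1 : 1 < s
    · obtain ⟨m, -, hm⟩ := Nat.exists_mul_mod_eq_one_of_coprime hcop h1
      refine ⟨m, r * m / s, ?_⟩
      have h2 := Nat.div_add_mod (r * m) s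
      rw [mul_comm m r, mul_comm (r * m / s) s]
      omega
    · have hs1 : s = 1 := by omega
      exact ⟨1, r - 1, by subst hs1; omega⟩
  have hp : 0 < p := by
    rcases Nat.eq_zero_or_pos p with h | h
    · rw [h] at hpq; omega
    · exact h
  refine ⟨fun w => ((a + Complex.exp w.2) ^ q * w.1 ^ r,
      (a + Complex.exp w.2) ^ p * w.1 ^ s),
    fun w => (w.1, a + Complex.exp w.2), p, q, hpq, ?_, ?_, ?_, ?_, ?_, ?_⟩
  · fun_prop
  · fun_prop
  · ext ⟨x, y⟩
    simp only [Set.mem_range, Set.mem_setOf_eq, Prod.mk.injEq, Prod.exists]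
    constructor
    · rintro ⟨u, t, rfl, rfl⟩
      simpa using Complex.exp_ne_zero t
    · intro h
      exact ⟨x, Complex.log (y - a), rfl, by
        rw [Complex.exp_log (sub_ne_zero.mpr h)]; ring⟩
  · intro w; rfl
  · rintro z ⟨⟨u, t⟩, rfl⟩
    simp only [Set.mem_setOf_eq, not_and, not_ne_iff]
    intro heq
    set v := a + Complex.exp t with hv
    have hva : v ≠ a := by
      simp only [hv, ne_eq, add_eq_left]
      exact Complex.exp_ne_zero t
    have h1 : (v ^ p * u ^ s) ^ r = v * (v ^ (q * s) * u ^ (r * s)) := by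
      rw [mul_pow, ← pow_mul, ← pow_mul, hpq, pow_succ]
      ring_nf
    have h2 : (v ^ q * u ^ r) ^ s = v ^ (q * s) * u ^ (r * s) := by
      rw [mul_pow, ← pow_mul, ← pow_mul]
    rw [h1, h2] at heq
    have hzero : v ^ (q * s) * u ^ (r * s) = 0 := by
      by_contra hz
      exact hva (mul_right_cancel₀ hz heq)
    rcases mul_eq_zero.mp hzero with hz | hz
    · rw [pow_eq_zero_iff'] at hz
      obtain ⟨hv0, hqs⟩ := hz
      have hq : q ≠ 0 := fun h => hqs (by simp [h])
      simp [hv0, zero_pow hq, zero_pow hp.ne']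
    · rw [pow_eq_zero_iff (by positivity : r * s ≠ 0)] at hz
      simp [hz, zero_pow hr.ne', zero_pow hs.ne']
  · -- Jacobian
    obtain ⟨t₀, hvne⟩ : ∃ t : ℂ, a + Complex.exp t ≠ 0 := by
      rcases eq_or_ne (a + 1) 0 with h | h
      · refine ⟨(Real.log 2 : ℂ), ?_⟩
        rw [← Complex.ofReal_exp, Real.exp_log (by norm_num : (0:ℝ) < 2)]
        intro hc
        have : (1 : ℂ) = 0 := by push_cast at hc ⊢; linear_combination hc - h
        exact one_ne_zero this
      · exact ⟨0, by simpa using h⟩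
    refine ⟨(1, t₀), ?_⟩
    set v0 := a + Complex.exp t₀ with hv0
    set e0 := Complex.exp t₀ with he0
    have Hsnd : ∀ n : ℕ, HasFDerivAt (fun w : ℂ × ℂ => (a + Complex.exp w.2) ^ n)
        (((ContinuousLinearMap.smulRight (1 : ℂ →L[ℂ] ℂ)
          ((n : ℂ) * v0 ^ (n - 1) * e0)).comp (ContinuousLinearMap.snd ℂ ℂ ℂ)))
        ((1 : ℂ), t₀) := by
      intro n
      have h1 : HasDerivAt (fun t : ℂ => (a + Complex.exp t) ^ n)
          ((n : ℂ) * v0 ^ (n - 1) * e0) t₀ := by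
        have h2 := ((Complex.hasDerivAt_exp t₀).const_add a).fun_pow n
        convert h2 using 1
      exact h1.hasFDerivAt.comp (f := Prod.snd) ((1 : ℂ), t₀) hasFDerivAt_snd
    have Hfst : ∀ n : ℕ, HasFDerivAt (fun w : ℂ × ℂ => w.1 ^ n)
        (((ContinuousLinearMap.smulRight (1 : ℂ →L[ℂ] ℂ)
          ((n : ℂ) * 1 ^ (n - 1))).comp (ContinuousLinearMap.fst ℂ ℂ ℂ)))
        ((1 : ℂ), t₀) := by
      intro n
      exact (hasDerivAt_pow n 1).hasFDerivAt.comp ((1 : ℂ), t₀) hasFDerivAt_fst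
    have HD := ((Hsnd q).fun_mul (Hfst r)).prodMk ((Hsnd p).fun_mul (Hfst s))
    rw [HD.fderiv]
    simp only [ContinuousLinearMap.prod_apply, ContinuousLinearMap.add_apply,
      ContinuousLinearMap.smul_apply, ContinuousLinearMap.comp_apply,
      ContinuousLinearMap.smulRight_apply, ContinuousLinearMap.coe_fst',
      ContinuousLinearMap.coe_snd', ContinuousLinearMap.one_apply,
      smul_eq_mul, one_pow, mul_one, mul_zero, zero_mul, one_mul, add_zero, zero_add]
    have hcast : (p : ℂ) * r - q * s = 1 := by
      have h : ((p : ℂ)) * r = (q : ℂ) * s + 1 := by exact_mod_cast hpq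
      rw [h]; ring
    rcases Nat.eq_zero_or_pos q with hq | hq
    · subst hq
      obtain ⟨hp1, hr1⟩ : p = 1 ∧ r = 1 := by
        constructor <;> nlinarith [hpq]
      subst hp1; subst hr1
      have : (a + cexp t₀) ^ (0:ℕ) * ((1:ℕ) : ℂ) * (((1:ℕ) : ℂ) * v0 ^ (1 - 1) * e0) -
          ((0:ℕ) : ℂ) * v0 ^ (0 - 1) * e0 * ((a + cexp t₀) ^ 1 * ((s:ℕ) : ℂ)) = e0 := by
        push_cast; ring
      rw [this]
      exact Complex.exp_ne_zero t₀
    · have hn : q + (p - 1) = (q - 1) + p := by omega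
      have key : (a + cexp t₀) ^ q * ↑r * (↑p * v0 ^ (p - 1) * e0) -
          ↑q * v0 ^ (q - 1) * e0 * ((a + cexp t₀) ^ p * ↑s)
          = e0 * v0 ^ (q + (p - 1)) * ((p : ℂ) * r - (q : ℂ) * s) := by
        rw [show a + cexp t₀ = v0 from rfl]
        calc v0 ^ q * ↑r * (↑p * v0 ^ (p - 1) * e0) -
              ↑q * v0 ^ (q - 1) * e0 * (v0 ^ p * ↑s)
            = e0 * (v0 ^ q * v0 ^ (p - 1)) * ((p : ℂ) * r) -
              e0 * (v0 ^ (q - 1) * v0 ^ p) * ((q : ℂ) * s) := by ring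
          _ = e0 * v0 ^ (q + (p - 1)) * ((p : ℂ) * r - (q : ℂ) * s) := by
              rw [← pow_add, ← pow_add, ← hn]; ring
      rw [key, hcast, mul_one]
      exact mul_ne_zero (Complex.exp_ne_zero t₀) (pow_ne_zero _ hvne)
end
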